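/- arXiv:1211.5326 — 13 statements merged into one kernel-verified Lean document; each statement's English description precedes it below -/
import Mathlib

section
/- There exists a non-trivial (non-monochromatic) coloring φ of the complete graph K_n that is a constant 2-labelling for some constants a, b if and only if all vertices other than v have equal weight, i.e. w(u₁) = w(u₂) for all u₁, u₂ ∈ Fin n with u₁ ≠ v and u₂ ≠ v. -/
/-- The complete graph `K_n` (whose automorphisms are all permutations of `Fin n`)
admits a non-trivial (non-monochromatic) constant 2-labelling for some constants
`a`, `b` iff all vertices other than `v` have equal weight. -/
theorem completeGraph_nontrivial_constant2Labelling_iff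
    (n : ℕ) (hn : 2 ≤ n) (v : Fin n) (w : Fin n → ℝ) :
    (∃ (φ : Fin n → Bool) (a b : ℝ),
        (∃ u₁ u₂ : Fin n, φ u₁ ≠ φ u₂) ∧
        ∀ σ : Equiv.Perm (Fin n),
          (φ (σ v) = true →
            (∑ u : Fin n, if φ (σ u) = true then w u else 0) = a) ∧
          (φ (σ v) = false →
            (∑ u : Fin n, if φ (σ u) = true then w u else 0) = b)) ↔
      ∀ u₁ u₂ : Fin n, u₁ ≠ v → u₂ ≠ v → w u₁ = w u₂ := by
  constructor
  · rintro ⟨φ, a, b, ⟨p₀, q₀, hpq⟩, h⟩ u₁ u₂ h1 h2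
    rcases eq_or_ne u₁ u₂ with rfl | h12
    · rfl
    obtain ⟨p, q, hp, hq⟩ : ∃ p q : Fin n, φ p = true ∧ φ q = false := by
      cases hb : φ p₀ <;> cases hb' : φ q₀
      · exact absurd (hb.trans hb'.symm) hpq
      · exact ⟨q₀, p₀, hb', hb⟩
      · exact ⟨p₀, q₀, hb, hb'⟩
      · exact absurd (hb.trans hb'.symm) hpq
    have hpq' : p ≠ q := by rintro rfl; rw [hp] at hq; exact Bool.noConfusion hq
    set σ₁ := Equiv.swap u₁ p with hσ₁
    have h2p : σ₁ u₂ ≠ p := by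
      intro hcontra
      have : σ₁ u₂ = σ₁ u₁ := by rw [hcontra, hσ₁, Equiv.swap_apply_left]
      exact h12 (σ₁.injective this).symm
    set σ := (Equiv.swap (σ₁ u₂) q) * σ₁ with hσ
    have hσu₁ : σ u₁ = p := by
      rw [hσ, Equiv.Perm.mul_apply, hσ₁, Equiv.swap_apply_left,
        Equiv.swap_apply_of_ne_of_ne (Ne.symm h2p) hpq']
    have hσu₂ : σ u₂ = q := by
      rw [hσ, Equiv.Perm.mul_apply, Equiv.swap_apply_left]
    set σ' := σ * Equiv.swap u₁ u₂ with hσ'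
    have hσ'v : σ' v = σ v := by
      rw [hσ', Equiv.Perm.mul_apply,
        Equiv.swap_apply_of_ne_of_ne (Ne.symm h1) (Ne.symm h2)]
    have hsum : (∑ u : Fin n, if φ (σ u) = true then w u else 0)
        = ∑ u : Fin n, if φ (σ' u) = true then w u else 0 := by
      cases hφv : φ (σ v) with
      | true =>
        rw [(h σ).1 hφv, (h σ').1 (by rw [hσ'v]; exact hφv)]
      | false =>
        rw [(h σ).2 hφv, (h σ').2 (by rw [hσ'v]; exact hφv)]
    have key : ∑ u : Fin n,
        ((if φ (σ u) = true then w u else 0) - (if φ (σ' u) = true then w u else 0)) = 0 := by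
      rw [Finset.sum_sub_distrib, hsum, sub_self]
    have hrestrict : ∑ u ∈ ({u₁, u₂} : Finset (Fin n)),
        ((if φ (σ u) = true then w u else 0) - (if φ (σ' u) = true then w u else 0))
        = ∑ u : Fin n,
        ((if φ (σ u) = true then w u else 0) - (if φ (σ' u) = true then w u else 0)) := by
      apply Finset.sum_subset (Finset.subset_univ _)
      intro x _ hx
      simp only [Finset.mem_insert, Finset.mem_singleton, not_or] at hx
      have : σ' x = σ x := by
        rw [hσ', Equiv.Perm.mul_apply, Equiv.swap_apply_of_ne_of_ne hx.1 hx.2]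
      rw [this, sub_self]
    rw [key, Finset.sum_pair h12] at hrestrict
    have hσ'u₁ : σ' u₁ = q := by
      rw [hσ', Equiv.Perm.mul_apply, Equiv.swap_apply_left, hσu₂]
    have hσ'u₂ : σ' u₂ = p := by
      rw [hσ', Equiv.Perm.mul_apply, Equiv.swap_apply_right, hσu₁]
    rw [hσu₁, hσu₂, hσ'u₁, hσ'u₂, hp, hq] at hrestrict
    simp at hrestrict
    linarith
  · intro h
    obtain ⟨u₀, hu₀⟩ : ∃ u₀ : Fin n, u₀ ≠ v := by
      have : 1 < Fintype.card (Fin n) := by rw [Fintype.card_fin]; omega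
      exact Fintype.exists_ne_of_one_lt_card this v
    refine ⟨fun u => decide (u = v), w v, w u₀, ⟨v, u₀, by simp [hu₀]⟩, fun σ => ?_⟩
    have hsum : (∑ u : Fin n, if (decide (σ u = v) : Bool) = true then w u else 0)
        = w (σ⁻¹ v) := by
      have : ∀ u : Fin n, σ u = v ↔ u = σ⁻¹ v := by
        intro u
        constructor
        · intro h'; rw [← h']; simp
        · intro h'; rw [h']; simp
      simp only [decide_eq_true_eq, this]
      simp
    constructor
    · intro hv
      simp only [decide_eq_true_eq] at hv
      have : σ⁻¹ v = v := by
        rw [Equiv.Perm.inv_def, Equiv.symm_apply_eq]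
        exact hv.symm
      rw [hsum, this]
    · intro hv
      simp only [decide_eq_false_iff_not] at hv
      have hne : σ⁻¹ v ≠ v := by
        intro hc
        have := congrArg σ hc
        simp at this
        exact hv this.symm
      rw [hsum, h _ _ hne hu₀]
end

section
/- If φ is a non-monochromatic coloring of a Type 2 cycle that is a constant 2-labelling with constants a and b, then either (i) φ is (p/2)-periodic and there exists a natural number α with 0 ≤ α ≤ (p−4)/2 such that a = 2αx + t + z and b = 2(α+1)x, or (ii) φ is (p/2)-antiperiodic, a = (p/2−1)x + z and b = (p/2−1)x + t. -/
/-- Non-trivial constant 2-labellings of Type 2 cycles (`z x^((p-2)/2) t x^((p-2)/2)`):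
either `φ` is `(p/2)`-periodic with `a = 2αx + t + z` and `b = 2(α+1)x` for some
`0 ≤ α ≤ (p-4)/2`, or `φ` is `(p/2)`-antiperiodic with `a = (p/2-1)x + z` and
`b = (p/2-1)x + t`. -/
theorem type2_constant2Labelling
    (p : ℕ) [NeZero p] (hp : 4 ≤ p) (hpe : Even p)
    (w : ZMod p → ℝ) (z x t : ℝ) (hxt : x ≠ t)
    (hw0 : w 0 = z) (hwt : w ((p / 2 : ℕ) : ZMod p) = t)
    (hw : ∀ i : ZMod p, i ≠ 0 → i ≠ ((p / 2 : ℕ) : ZMod p) → w i = x)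
    (φ : ZMod p → Bool) (hnontriv : ∃ i j : ZMod p, φ i ≠ φ j)
    (a b : ℝ)
    (hlab : ∀ k : ZMod p,
      (φ k = true → (∑ u : ZMod p, if φ (u + k) = true then w u else 0) = a) ∧
      (φ k = false → (∑ u : ZMod p, if φ (u + k) = true then w u else 0) = b)) :
    ((∀ i : ZMod p, φ (i + ((p / 2 : ℕ) : ZMod p)) = φ i) ∧
      ∃ α : ℕ, α ≤ (p - 4) / 2 ∧
        a = 2 * (α : ℝ) * x + t + z ∧ b = 2 * ((α : ℝ) + 1) * x) ∨
    ((∀ i : ZMod p, φ (i + ((p / 2 : ℕ) : ZMod p)) ≠ φ i) ∧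
      a = (((p / 2 : ℕ) : ℝ) - 1) * x + z ∧
      b = (((p / 2 : ℕ) : ℝ) - 1) * x + t) := by
  classical
  obtain ⟨r, hr⟩ := hpe
  set h : ZMod p := ((p / 2 : ℕ) : ZMod p) with hhdef
  have hvalh : h.val = p / 2 := ZMod.val_natCast_of_lt (by omega)
  have hhne : h ≠ 0 := by
    intro e
    rw [e, ZMod.val_zero] at hvalh
    omega
  have hh0 : h + h = 0 := by
    rw [hhdef, ← Nat.cast_add]
    have e : p / 2 + p / 2 = p := by omega
    rw [e, ZMod.natCast_self]
  have htx : t - x ≠ 0 := sub_ne_zero.mpr (Ne.symm hxt)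
  set Bset : Finset (ZMod p) := Finset.univ.filter (fun v => φ v = true) with hBdef
  set N : ℕ := Bset.card with hNdef
  -- the key sum formula
  have hSk : ∀ k : ZMod p, (∑ u : ZMod p, if φ (u + k) = true then w u else 0)
      = (N : ℝ) * x + (if φ k = true then z - x else 0)
        + (if φ (k + h) = true then t - x else 0) := by
    intro k
    have hpt : ∀ u : ZMod p, (if φ (u + k) = true then w u else 0)
        = (if φ (u + k) = true then x else 0)
          + (if u = 0 then (if φ (u + k) = true then z - x else 0) else 0)
          + (if u = h then (if φ (u + k) = true then t - x else 0) else 0) := by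
      intro u
      by_cases h0 : u = 0
      · subst h0
        have hne : (0 : ZMod p) ≠ h := fun e => hhne e.symm
        rw [zero_add]
        by_cases hφ : φ k = true <;> simp [hφ, hw0, hne] <;> ring
      · by_cases h1 : u = h
        · subst h1
          by_cases hφ : φ (h + k) = true <;> simp [hφ, hwt, h0] <;> ring
        · by_cases hφ : φ (u + k) = true <;> simp [hφ, hw u h0 h1, h0, h1]
    rw [Finset.sum_congr rfl (fun u _ => hpt u)]
    rw [Finset.sum_add_distrib, Finset.sum_add_distrib]
    have e1 : (∑ u : ZMod p, if φ (u + k) = true then x else 0)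
        = ∑ v : ZMod p, if φ v = true then x else 0 :=
      Fintype.sum_equiv (Equiv.addRight k) _ _ (fun u => rfl)
    have e2 : (∑ v : ZMod p, if φ v = true then x else 0) = (N : ℝ) * x := by
      rw [← Finset.sum_filter, ← hBdef, Finset.sum_const, nsmul_eq_mul]
    rw [e1, e2, Finset.sum_ite_eq' Finset.univ (0 : ZMod p)
        (fun u => if φ (u + k) = true then z - x else 0),
      Finset.sum_ite_eq' Finset.univ h
        (fun u => if φ (u + k) = true then t - x else 0)]
    simp [zero_add, add_comm h k]
  -- vertices of the same colour have same colour at distance h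
  have key : ∀ k₁ k₂ : ZMod p, φ k₁ = φ k₂ → φ (k₁ + h) = φ (k₂ + h) := by
    intro k₁ k₂ hk
    have hiff : (if φ (k₁ + h) = true then t - x else 0)
        = (if φ (k₂ + h) = true then t - x else 0) := by
      cases hb : φ k₁
      · have hb2 : φ k₂ = false := by rw [← hk]; exact hb
        have e1 := (hlab k₁).2 hb
        have e2 := (hlab k₂).2 hb2
        rw [hSk k₁] at e1
        rw [hSk k₂] at e2
        rw [hb] at e1
        rw [hb2] at e2
        simp only [Bool.false_eq_true, if_false] at e1 e2
        linarith
      · have hb2 : φ k₂ = true := by rw [← hk]; exact hb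
        have e1 := (hlab k₁).1 hb
        have e2 := (hlab k₂).1 hb2
        rw [hSk k₁] at e1
        rw [hSk k₂] at e2
        rw [hb] at e1
        rw [hb2] at e2
        simp only [if_true] at e1 e2
        linarith
    cases hb1 : φ (k₁ + h) <;> cases hb2 : φ (k₂ + h)
    · rfl
    · exfalso
      rw [if_neg (by simp [hb1]), if_pos hb2] at hiff
      exact htx hiff.symm
    · exfalso
      rw [if_pos hb1, if_neg (by simp [hb2])] at hiff
      exact htx hiff
    · rfl
  -- a black and a white vertex
  obtain ⟨i0, j0, hi0, hj0⟩ : ∃ i0 j0 : ZMod p, φ i0 = true ∧ φ j0 = false := by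
    obtain ⟨i, j, hij⟩ := hnontriv
    cases hbi : φ i
    · cases hbj : φ j
      · rw [hbi, hbj] at hij; exact absurd rfl hij
      · exact ⟨j, i, hbj, hbi⟩
    · cases hbj : φ j
      · exact ⟨i, j, hbi, hbj⟩
      · rw [hbi, hbj] at hij; exact absurd rfl hij
  have hcb : ∀ k, φ k = true → φ (k + h) = φ (i0 + h) :=
    fun k hk => key k i0 (hk.trans hi0.symm)
  have hcw : ∀ k, φ k = false → φ (k + h) = φ (j0 + h) :=
    fun k hk => key k j0 (hk.trans hj0.symm)
  -- cardinality facts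
  set Wset : Finset (ZMod p) := Finset.univ.filter (fun v => φ v = false) with hWdef
  have hNpos : 0 < N := Finset.card_pos.mpr ⟨i0, by simp [hBdef, hi0]⟩
  have hWpos : 0 < Wset.card := Finset.card_pos.mpr ⟨j0, by simp [hWdef, hj0]⟩
  have hcardsum : N + Wset.card = p := by
    have e := Finset.card_filter_add_card_filter_not
      (s := (Finset.univ : Finset (ZMod p))) (p := fun v => φ v = true)
    have eW : (Finset.univ.filter fun v : ZMod p => ¬ φ v = true) = Wset := by
      apply Finset.filter_congr
      intro v _
      simp [Bool.not_eq_true]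
    rw [eW] at e
    rw [hNdef, hBdef, e, Finset.card_univ, ZMod.card]
  have hvallt : ∀ v : ZMod p, v.val < p := fun v => ZMod.val_lt v
  -- case analysis on the colours at distance h from a black / white vertex
  cases hc1 : φ (i0 + h) <;> cases hc2 : φ (j0 + h)
  · -- all white : contradiction
    exfalso
    have hall : ∀ v : ZMod p, φ v = false := by
      intro v
      have hv : (v + h) + h = v := by rw [add_assoc, hh0, add_zero]
      cases hvh : φ (v + h)
      · have e := hcw (v + h) hvh; rw [hc2, hv] at e; exact e
      · have e := hcb (v + h) hvh; rw [hc1, hv] at e; exact e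
    rw [hall i0] at hi0
    exact Bool.false_ne_true hi0
  · -- antiperiodic case
    right
    have hanti : ∀ i : ZMod p, φ (i + h) ≠ φ i := by
      intro i
      cases hb : φ i
      · have e := hcw i hb; rw [hc2] at e; simp [e, hb]
      · have e := hcb i hb; rw [hc1] at e; simp [e, hb]
    have hBW : N = Wset.card := by
      rw [hNdef]
      apply Finset.card_nbij' (fun v => v + h) (fun v => v + h)
      · intro v hv
        simp only [Finset.mem_coe, hBdef, Finset.mem_filter] at hv
        simp only [Finset.mem_coe, hWdef, Finset.mem_filter]
        refine ⟨Finset.mem_univ _, ?_⟩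
        have e := hcb v hv.2
        rw [hc1] at e
        exact e
      · intro v hv
        simp only [Finset.mem_coe, hWdef, Finset.mem_filter] at hv
        simp only [Finset.mem_coe, hBdef, Finset.mem_filter]
        refine ⟨Finset.mem_univ _, ?_⟩
        have e := hcw v hv.2
        rw [hc2] at e
        exact e
      · intro v _; show v + h + h = v; rw [add_assoc, hh0, add_zero]
      · intro v _; show v + h + h = v; rw [add_assoc, hh0, add_zero]
    have hN : N = p / 2 := by omega
    have ea := (hlab i0).1 hi0
    rw [hSk i0, hi0, hc1] at ea
    simp only [if_true, Bool.false_eq_true, if_false, add_zero] at ea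
    have eb := (hlab j0).2 hj0
    rw [hSk j0, hj0, hc2] at eb
    simp only [if_true, Bool.false_eq_true, if_false] at eb
    have hNR : (N : ℝ) = ((p / 2 : ℕ) : ℝ) := by rw [hN]
    refine ⟨hanti, by rw [← hNR]; linarith, by rw [← hNR]; linarith⟩
  · -- periodic case
    left
    have hper : ∀ i : ZMod p, φ (i + h) = φ i := by
      intro i
      cases hb : φ i
      · have e := hcw i hb; rw [hc2] at e; exact e
      · have e := hcb i hb; rw [hc1] at e; exact e
    refine ⟨hper, ?_⟩
    -- N is even via pairing v ↦ v + h between the two halves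
    set B1 : Finset (ZMod p) := Bset.filter (fun v => v.val < p / 2) with hB1
    set B2 : Finset (ZMod p) := Bset.filter (fun v => ¬ v.val < p / 2) with hB2
    have hsplit : B1.card + B2.card = N := by
      rw [hB1, hB2, hNdef]
      exact Finset.card_filter_add_card_filter_not _
    have h12 : B1.card = B2.card := by
      apply Finset.card_nbij' (fun v => v + h) (fun v => v + h)
      · intro v hv
        simp only [Finset.mem_coe, hB1, Finset.mem_filter, hBdef] at hv
        simp only [Finset.mem_coe, hB2, Finset.mem_filter, hBdef]
        have hval : (v + h).val = v.val + p / 2 := by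
          rw [ZMod.val_add_of_lt (by rw [hvalh]; omega), hvalh]
        refine ⟨⟨Finset.mem_univ _, by rw [hper]; exact hv.1.2⟩, by omega⟩
      · intro v hv
        simp only [Finset.mem_coe, hB2, Finset.mem_filter, hBdef] at hv
        simp only [Finset.mem_coe, hB1, Finset.mem_filter, hBdef]
        have hvp := hvallt v
        have hval : (v + h).val = v.val - p / 2 := by
          have e : v.val + h.val = (v.val - p / 2) + p := by rw [hvalh]; omega
          rw [ZMod.val_add, e, Nat.add_mod_right, Nat.mod_eq_of_lt (by omega)]
        refine ⟨⟨Finset.mem_univ _, by rw [hper]; exact hv.1.2⟩, by omega⟩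
      · intro v _; show v + h + h = v; rw [add_assoc, hh0, add_zero]
      · intro v _; show v + h + h = v; rw [add_assoc, hh0, add_zero]
    refine ⟨B1.card - 1, by omega, ?_, ?_⟩
    · have ea := (hlab i0).1 hi0
      have hph : φ (i0 + h) = true := by rw [hper]; exact hi0
      rw [hSk i0, hi0, hph] at ea
      simp only [if_true] at ea
      have hNa : (N : ℝ) = 2 * ((((B1.card - 1 : ℕ)) : ℝ) + 1) := by
        have : N = 2 * ((B1.card - 1) + 1) := by omega
        rw [this]
        push_cast
        ring
      rw [hNa] at ea
      linarith
    · have eb := (hlab j0).2 hj0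
      have hph : φ (j0 + h) = false := by rw [hper]; exact hj0
      rw [hSk j0, hj0, hph] at eb
      simp only [Bool.false_eq_true, if_false, add_zero] at eb
      have hNa : (N : ℝ) = 2 * ((((B1.card - 1 : ℕ)) : ℝ) + 1) := by
        have : N = 2 * ((B1.card - 1) + 1) := by omega
        rw [this]
        push_cast
        ring
      rw [hNa] at eb
      linarith
  · -- all black : contradiction
    exfalso
    have hall : ∀ v : ZMod p, φ v = true := by
      intro v
      have hv : (v + h) + h = v := by rw [add_assoc, hh0, add_zero]
      cases hvh : φ (v + h)
      · have e := hcw (v + h) hvh; rw [hc2, hv] at e; exact e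
      · have e := hcb (v + h) hvh; rw [hc1, hv] at e; exact e
    rw [hall j0] at hj0
    simp at hj0
end

section
/- If a coloring φ of a Type 3 cycle is a constant 2-labelling for some constants a and b, then φ is monochromatic; in other words, only trivial colorings of a Type 3 cycle are constant 2-labellings. -/
/-- On a Type 3 cycle (weight word `z (xy)^((p-1)/2)` with `x ≠ y`), every
constant 2-labelling is monochromatic. -/
theorem type3_constant2Labelling_monochromatic
    (p : ℕ) [NeZero p] (hp : 3 ≤ p) (hpo : Odd p)
    (w : ZMod p → ℝ) (z x y : ℝ) (hxy : x ≠ y)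
    (hw0 : w 0 = z)
    (hwx : ∀ i : ZMod p, Odd i.val → w i = x)
    (hwy : ∀ i : ZMod p, i ≠ 0 → Even i.val → w i = y)
    (φ : ZMod p → Bool) (a b : ℝ)
    (hlab : ∀ k : ZMod p,
      (φ k = true → (∑ u : ZMod p, if φ (u + k) = true then w u else 0) = a) ∧
      (φ k = false → (∑ u : ZMod p, if φ (u + k) = true then w u else 0) = b)) :
    ∀ i j : ZMod p, φ i = φ j := by
  have hpodd : p % 2 = 1 := Nat.odd_iff.mp hpo
  have hvcast : ∀ m : ℕ, m < p → ((m : ZMod p)).val = m := fun m hm =>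
    ZMod.val_natCast_of_lt hm
  have hself : ∀ u : ZMod p, ((u.val : ℕ) : ZMod p) = u := fun u =>
    ZMod.natCast_rightInverse u
  have hv1 : (1 : ZMod p).val = 1 := by
    have h := ZMod.val_natCast_of_lt (show 1 < p by omega)
    simpa using h
  have hv2 : (2 : ZMod p).val = 2 := by
    have h := ZMod.val_natCast_of_lt (show 2 < p by omega)
    simpa using h
  -- values of w at special points
  have hw1 : w 1 = x := hwx 1 (by rw [hv1]; exact odd_one)
  have hw2 : w 2 = y := by
    refine hwy 2 ?_ (by rw [hv2]; exact even_two)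
    intro h; rw [h] at hv2; simp at hv2
  have hm1 : (-1 : ZMod p) = ((p - 1 : ℕ) : ZMod p) := by
    have : ((p : ℕ) : ZMod p) = 0 := ZMod.natCast_self p
    push_cast [Nat.cast_sub (by omega : 1 ≤ p)]
    rw [this]; ring
  have hm2 : (-2 : ZMod p) = ((p - 2 : ℕ) : ZMod p) := by
    have : ((p : ℕ) : ZMod p) = 0 := ZMod.natCast_self p
    push_cast [Nat.cast_sub (by omega : 2 ≤ p)]
    rw [this]; ring
  have hwm1 : w (-1) = y := by
    rw [hm1]
    refine hwy _ ?_ ?_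
    · intro h
      have := hvcast (p - 1) (by omega)
      rw [h] at this; simp at this; omega
    · rw [hvcast (p - 1) (by omega)]
      rw [Nat.even_iff]; omega
  have hwm2 : w (-2) = x := by
    rw [hm2]
    refine hwx _ ?_
    rw [hvcast (p - 2) (by omega)]
    rw [Nat.odd_iff]; omega
  -- shift by 2 preserves w away from 0,1,2
  have hshift : ∀ u : ZMod p, u ≠ 0 → u ≠ 1 → u ≠ 2 → w (u - 2) = w u := by
    intro u h0 h1 h2
    have hvlt : u.val < p := ZMod.val_lt u
    have hv3 : 3 ≤ u.val := by
      by_contra hcon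
      have hcase : u.val = 0 ∨ u.val = 1 ∨ u.val = 2 := by omega
      rcases hcase with hc | hc | hc
      · exact h0 (by rw [← hself u, hc]; simp)
      · exact h1 (by rw [← hself u, hc]; simp)
      · exact h2 (by rw [← hself u, hc]; push_cast; ring)
    have hsub : (u - 2 : ZMod p) = ((u.val - 2 : ℕ) : ZMod p) := by
      have hcs : ((u.val - 2 : ℕ) : ZMod p) = ((u.val : ℕ) : ZMod p) - 2 := by
        push_cast [Nat.cast_sub (by omega : 2 ≤ u.val)]
        ring
      rw [hcs, hself]
    have hsubval : (u - 2 : ZMod p).val = u.val - 2 := by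
      rw [hsub, hvcast _ (by omega)]
    rcases Nat.even_or_odd u.val with he | ho
    · have hne : (u - 2 : ZMod p) ≠ 0 := by
        intro h
        rw [h] at hsubval; simp at hsubval; omega
      rw [hwy u h0 he, hwy _ hne (by rw [hsubval, Nat.even_iff] at *; omega)]
    · rw [hwx u ho, hwx _ (by rw [hsubval, Nat.odd_iff] at *; omega)]
  -- the key identity for S(k+2) - S(k)
  have hS : ∀ k : ZMod p,
      (∑ u : ZMod p, if φ (u + (k + 2)) = true then w u else 0)
      = (∑ u : ZMod p, if φ (u + k) = true then w u else 0)
        + ((if φ k = true then x - z else 0)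
          + (if φ (k + 1) = true then y - x else 0)
          + (if φ (k + 2) = true then z - y else 0)) := by
    intro k
    have hre : (∑ u : ZMod p, if φ (u + (k + 2)) = true then w u else 0)
        = ∑ u : ZMod p, if φ (u + k) = true then w (u - 2) else 0 := by
      refine Fintype.sum_equiv (Equiv.addRight (2 : ZMod p)) _ _ ?_
      intro u
      simp only [Equiv.coe_addRight]
      have : u + 2 + k = u + (k + 2) := by ring
      simp only [this]
      congr 1
      ring
    rw [hre]
    have hpt : ∀ u : ZMod p, (if φ (u + k) = true then w (u - 2) else 0)
        = (if φ (u + k) = true then w u else 0)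
          + ((if u = 0 then (if φ k = true then x - z else 0) else 0)
            + (if u = 1 then (if φ (k + 1) = true then y - x else 0) else 0)
            + (if u = 2 then (if φ (k + 2) = true then z - y else 0) else 0)) := by
      intro u
      by_cases h0 : u = 0
      · subst h0
        have h01 : (0 : ZMod p) ≠ 1 := by
          intro h; rw [← h] at hv1; simp at hv1
        have h02 : (0 : ZMod p) ≠ 2 := by
          intro h; rw [← h] at hv2; simp at hv2
        simp only [zero_add, if_neg h01, if_neg h02, if_pos rfl, zero_sub]
        cases h : φ k <;> simp [hwm2, hw0]
      · by_cases h1 : u = 1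
        · subst h1
          have h12 : (1 : ZMod p) ≠ 2 := by
            intro h; rw [h] at hv1; omega
          have hadd : (1 : ZMod p) + k = k + 1 := by ring
          simp only [hadd, if_neg h0, if_neg h12, if_pos rfl]
          have : (1 : ZMod p) - 2 = -1 := by ring
          rw [this]
          cases h : φ (k + 1) <;> simp [hwm1, hw1]
        · by_cases h2 : u = 2
          · subst h2
            have hadd : (2 : ZMod p) + k = k + 2 := by ring
            simp only [hadd, if_neg h0, if_neg h1, if_pos rfl]
            have : (2 : ZMod p) - 2 = 0 := by ring
            rw [this]
            cases h : φ (k + 2) <;> simp [hw0, hw2]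
          · rw [hshift u h0 h1 h2]
            simp [h0, h1, h2]
    calc (∑ u : ZMod p, if φ (u + k) = true then w (u - 2) else 0)
        = ∑ u : ZMod p, ((if φ (u + k) = true then w u else 0)
          + ((if u = 0 then (if φ k = true then x - z else 0) else 0)
            + (if u = 1 then (if φ (k + 1) = true then y - x else 0) else 0)
            + (if u = 2 then (if φ (k + 2) = true then z - y else 0) else 0))) := by
          exact Finset.sum_congr rfl (fun u _ => hpt u)
      _ = _ := by
          rw [Finset.sum_add_distrib, Finset.sum_add_distrib, Finset.sum_add_distrib]
          simp [Finset.sum_ite_eq']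
  -- evaluate S via the labelling
  have hSval : ∀ k : ZMod p,
      (∑ u : ZMod p, if φ (u + k) = true then w u else 0)
      = (if φ k = true then a else b) := by
    intro k
    cases h : φ k with
    | true => simp [(hlab k).1 h]
    | false => simp [(hlab k).2 h]
  -- no black-white transition
  have key : ∀ k : ZMod p, φ k = true → φ (k + 1) = false → False := by
    intro k hk hk1
    -- look right: φ (k+2) must be false
    have hr : φ (k + 2) = false := by
      by_contra h
      have h2 : φ (k + 2) = true := by simpa using h
      have := hS k
      rw [hSval (k + 2), hSval k, hk, h2, hk1] at this
      simp at this
      exact hxy (by linarith)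
    have hba : b - a = x - z := by
      have := hS k
      rw [hSval (k + 2), hSval k, hk, hr, hk1] at this
      simp at this
      linarith
    -- look left: φ (k-1) must be true
    have e1 : k - 1 + 1 = k := by ring
    have e2 : k - 1 + 2 = k + 1 := by ring
    have hl : φ (k - 1) = true := by
      by_contra h
      have h2 : φ (k - 1) = false := by simpa using h
      have := hS (k - 1)
      rw [e1, e2] at this
      rw [hSval (k + 1), hSval (k - 1), hk, h2, hk1] at this
      simp at this
      exact hxy (by linarith)
    have hba2 : b - a = y - z := by
      have := hS (k - 1)
      rw [e1, e2] at this
      rw [hSval (k + 1), hSval (k - 1), hk, hl, hk1] at this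
      simp at this
      linarith
    exact hxy (by linarith)
  -- no white-black transition either
  have key' : ∀ k : ZMod p, φ k = false → φ (k + 1) = true → False := by
    intro k hk hk1
    have hr : φ (k + 2) = true := by
      by_contra h
      have h2 : φ (k + 2) = false := by simpa using h
      have := hS k
      rw [hSval (k + 2), hSval k, hk, h2, hk1] at this
      simp at this
      exact hxy (by linarith)
    have hab : a - b = z - x := by
      have := hS k
      rw [hSval (k + 2), hSval k, hk, hr, hk1] at this
      simp at this
      linarith
    have e1 : k - 1 + 1 = k := by ring
    have e2 : k - 1 + 2 = k + 1 := by ring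
    have hl : φ (k - 1) = false := by
      by_contra h
      have h2 : φ (k - 1) = true := by simpa using h
      have := hS (k - 1)
      rw [e1, e2] at this
      rw [hSval (k + 1), hSval (k - 1), hk, h2, hk1] at this
      simp at this
      exact hxy (by linarith)
    have hab2 : a - b = z - y := by
      have := hS (k - 1)
      rw [e1, e2] at this
      rw [hSval (k + 1), hSval (k - 1), hk, hl, hk1] at this
      simp at this
      linarith
    exact hxy (by linarith)
  -- hence φ is constant
  have hconst : ∀ k : ZMod p, φ (k + 1) = φ k := by
    intro k
    cases hk : φ k with
    | true =>
      cases hk1 : φ (k + 1) with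
      | true => rfl
      | false => exact (key k hk hk1).elim
    | false =>
      cases hk1 : φ (k + 1) with
      | true => exact (key' k hk hk1).elim
      | false => rfl
  intro i j
  have hall : ∀ m : ℕ, φ (i + (m : ZMod p)) = φ i := by
    intro m
    induction m with
    | zero => simp
    | succ n ih =>
      have : i + ((n + 1 : ℕ) : ZMod p) = (i + (n : ZMod p)) + 1 := by
        push_cast; ring
      rw [this, hconst, ih]
  have : j = i + (((j - i : ZMod p).val : ℕ) : ZMod p) := by
    rw [hself]; ring
  rw [this, hall]
end

section
/- If φ is a non-monochromatic coloring of a Type 4 cycle that is a constant 2-labelling with constants a and b, then either (i) φ is 1-antiperiodic (alternate), a = (p/2−1)y + z and b = (p/2)x, or (ii) there exists a natural number α with 0 ≤ α ≤ (p−4)/2 such that a = (α+1)x + αy + z and b = (α+1)(x+y), and moreover for every k with φ(k) = white the number of black vertices j with j−k of odd representative equals the number of black vertices j with j−k of even representative. -/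
/-- Non-trivial constant 2-labellings of Type 4 cycles (`z (xy)^((p-2)/2) x`):
either `φ` is alternate with `a = (p/2-1)y + z` and `b = (p/2)x`, or there is
`0 ≤ α ≤ (p-4)/2` with `a = (α+1)x + αy + z`, `b = (α+1)(x+y)`, and from every
white vertex the numbers of black vertices at odd and at even distance agree. -/
theorem type4_constant2Labelling
    (p : ℕ) [NeZero p] (hp : 4 ≤ p) (hpe : Even p)
    (w : ZMod p → ℝ) (z x y : ℝ) (hxy : x ≠ y)
    (hw0 : w 0 = z)
    (hwx : ∀ i : ZMod p, Odd i.val → w i = x)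
    (hwy : ∀ i : ZMod p, i ≠ 0 → Even i.val → w i = y)
    (φ : ZMod p → Bool) (hnontriv : ∃ i j : ZMod p, φ i ≠ φ j)
    (a b : ℝ)
    (hlab : ∀ k : ZMod p,
      (φ k = true → (∑ u : ZMod p, if φ (u + k) = true then w u else 0) = a) ∧
      (φ k = false → (∑ u : ZMod p, if φ (u + k) = true then w u else 0) = b)) :
    ((∀ i : ZMod p, φ (i + 1) ≠ φ i) ∧
      a = (((p / 2 : ℕ) : ℝ) - 1) * y + z ∧ b = ((p / 2 : ℕ) : ℝ) * x) ∨
    (∃ α : ℕ, α ≤ (p - 4) / 2 ∧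
      a = ((α : ℝ) + 1) * x + (α : ℝ) * y + z ∧
      b = ((α : ℝ) + 1) * (x + y) ∧
      ∀ k : ZMod p, φ k = false →
        (Finset.univ.filter fun j : ZMod p => φ j = true ∧ Odd (j - k).val).card =
          (Finset.univ.filter fun j : ZMod p => φ j = true ∧ Even (j - k).val).card) := by
  obtain ⟨m, hm⟩ := hpe
  -- parity of a difference
  have hpar : ∀ j k : ZMod p, (j - k).val % 2 = (j.val + k.val) % 2 := by
    intro j k
    have h1 : (j - k + k).val = ((j - k).val + k.val) % p := ZMod.val_add _ _
    rw [sub_add_cancel] at h1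
    have h2 := Nat.div_add_mod ((j - k).val + k.val) p
    rw [← h1] at h2
    generalize hq : ((j - k).val + k.val) / p = q at h2
    have h3 : p * q = 2 * (m * q) := by rw [hm]; ring
    rw [h3] at h2
    generalize m * q = r at h2
    omega
  have hval1 : (1 : ZMod p).val = 1 := by
    rw [ZMod.val_one_eq_one_mod]
    exact Nat.mod_eq_of_lt (by omega)
  have hadd1 : ∀ v : ZMod p, ((v + 1).val + v.val) % 2 = 1 := by
    intro v
    have h := hpar (v + 1) v
    rw [add_sub_cancel_left, hval1] at h
    omega
  set n0 := (Finset.univ.filter fun j : ZMod p => φ j = true ∧ j.val % 2 = 0).card with hn0def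
  set n1 := (Finset.univ.filter fun j : ZMod p => φ j = true ∧ j.val % 2 = 1).card with hn1def
  -- counting lemmas
  have hOc : ∀ k : ZMod p,
      (Finset.univ.filter fun j : ZMod p => φ j = true ∧ Odd (j - k).val).card
        = if k.val % 2 = 0 then n1 else n0 := by
    intro k
    by_cases hk : k.val % 2 = 0
    · rw [if_pos hk, hn1def]
      congr 1
      refine Finset.filter_congr fun j _ => ?_
      have := hpar j k
      rw [Nat.odd_iff]
      constructor
      · rintro ⟨h1, h2⟩; exact ⟨h1, by omega⟩
      · rintro ⟨h1, h2⟩; exact ⟨h1, by omega⟩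
    · rw [if_neg hk, hn0def]
      congr 1
      refine Finset.filter_congr fun j _ => ?_
      have := hpar j k
      rw [Nat.odd_iff]
      constructor
      · rintro ⟨h1, h2⟩; exact ⟨h1, by omega⟩
      · rintro ⟨h1, h2⟩; exact ⟨h1, by omega⟩
  have hEc : ∀ k : ZMod p,
      (Finset.univ.filter fun j : ZMod p => φ j = true ∧ Even (j - k).val).card
        = if k.val % 2 = 0 then n0 else n1 := by
    intro k
    by_cases hk : k.val % 2 = 0
    · rw [if_pos hk, hn0def]
      congr 1
      refine Finset.filter_congr fun j _ => ?_
      have := hpar j k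
      rw [Nat.even_iff]
      constructor
      · rintro ⟨h1, h2⟩; exact ⟨h1, by omega⟩
      · rintro ⟨h1, h2⟩; exact ⟨h1, by omega⟩
    · rw [if_neg hk, hn1def]
      congr 1
      refine Finset.filter_congr fun j _ => ?_
      have := hpar j k
      rw [Nat.even_iff]
      constructor
      · rintro ⟨h1, h2⟩; exact ⟨h1, by omega⟩
      · rintro ⟨h1, h2⟩; exact ⟨h1, by omega⟩
  -- the weighted sum formula
  have hsum : ∀ k : ZMod p,
      (∑ u : ZMod p, if φ (u + k) = true then w u else 0)
        = x * (if k.val % 2 = 0 then (n1 : ℝ) else n0)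
          + y * (if k.val % 2 = 0 then (n0 : ℝ) else n1)
          + (if φ k = true then z - y else 0) := by
    intro k
    have step1 : (∑ u : ZMod p, if φ (u + k) = true then w u else 0)
        = ∑ j : ZMod p, if φ j = true then w (j - k) else 0 := by
      refine Fintype.sum_equiv (Equiv.addRight k) _ _ fun u => ?_
      simp
    have step2 : ∀ j : ZMod p, (if φ j = true then w (j - k) else 0)
        = ((if φ j = true ∧ Odd (j - k).val then x else 0)
            + (if φ j = true ∧ Even (j - k).val then y else 0))
          + (if j = k then (if φ k = true then z - y else 0) else 0) := by
      intro j
      by_cases hj : φ j = true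
      · by_cases hjk : j = k
        · subst hjk
          rw [if_pos hj, if_pos rfl, if_pos hj, sub_self, hw0]
          simp only [ZMod.val_zero, Nat.odd_iff, Nat.even_iff, Nat.zero_mod]
          simp [hj]
        · rcases Nat.even_or_odd (j - k).val with he | ho
          · have hne : j - k ≠ 0 := sub_ne_zero.mpr hjk
            rw [if_pos hj, hwy _ hne he, if_neg hjk,
                if_neg (fun h => (Nat.not_odd_iff_even.mpr he) h.2),
                if_pos ⟨hj, he⟩]
            ring
          · rw [if_pos hj, hwx _ ho, if_neg hjk,
                if_pos ⟨hj, ho⟩,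
                if_neg (fun h => (Nat.not_even_iff_odd.mpr ho) h.2)]
            ring
      · by_cases hjk : j = k
        · subst hjk
          simp [hj]
        · simp [hj, hjk]
    rw [step1, Finset.sum_congr rfl fun j _ => step2 j]
    rw [Finset.sum_add_distrib, Finset.sum_add_distrib]
    have e1 : (∑ j : ZMod p, if φ j = true ∧ Odd (j - k).val then x else 0)
        = x * (if k.val % 2 = 0 then (n1 : ℝ) else n0) := by
      rw [← Finset.sum_filter, Finset.sum_const, nsmul_eq_mul, hOc k]
      split_ifs <;> ring
    have e2 : (∑ j : ZMod p, if φ j = true ∧ Even (j - k).val then y else 0)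
        = y * (if k.val % 2 = 0 then (n0 : ℝ) else n1) := by
      rw [← Finset.sum_filter, Finset.sum_const, nsmul_eq_mul, hEc k]
      split_ifs <;> ring
    have e3 : (∑ j : ZMod p, if j = k then (if φ k = true then z - y else 0) else 0)
        = (if φ k = true then z - y else 0) := by
      rw [Finset.sum_ite_eq' Finset.univ k fun _ => (if φ k = true then z - y else 0)]
      simp
    rw [e1, e2, e3]
  -- the four basic equations
  have eqB0 : ∀ k : ZMod p, φ k = true → k.val % 2 = 0 →
      x * (n1 : ℝ) + y * n0 + (z - y) = a := by
    intro k hk hk0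
    have h := (hlab k).1 hk
    rw [hsum k, if_pos hk0, if_pos hk0, if_pos hk] at h
    linarith
  have eqB1 : ∀ k : ZMod p, φ k = true → k.val % 2 = 1 →
      x * (n0 : ℝ) + y * n1 + (z - y) = a := by
    intro k hk hk1
    have h := (hlab k).1 hk
    rw [hsum k, if_neg (by omega), if_neg (by omega), if_pos hk] at h
    linarith
  have eqW0 : ∀ k : ZMod p, φ k = false → k.val % 2 = 0 →
      x * (n1 : ℝ) + y * n0 = b := by
    intro k hk hk0
    have h := (hlab k).2 hk
    rw [hsum k, if_pos hk0, if_pos hk0, if_neg (by simp [hk])] at h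
    linarith
  have eqW1 : ∀ k : ZMod p, φ k = false → k.val % 2 = 1 →
      x * (n0 : ℝ) + y * n1 = b := by
    intro k hk hk1
    have h := (hlab k).2 hk
    rw [hsum k, if_neg (by omega), if_neg (by omega), if_neg (by simp [hk])] at h
    linarith
  -- black and white vertices exist
  obtain ⟨i0, j0, hij⟩ := hnontriv
  have hBW : (∃ kb : ZMod p, φ kb = true) ∧ (∃ kw : ZMod p, φ kw = false) := by
    cases h0 : φ i0 with
    | false =>
      cases h1 : φ j0 with
      | false => rw [h0, h1] at hij; exact absurd rfl hij
      | true => exact ⟨⟨j0, h1⟩, ⟨i0, h0⟩⟩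
    | true =>
      cases h1 : φ j0 with
      | false => exact ⟨⟨i0, h0⟩, ⟨j0, h1⟩⟩
      | true => rw [h0, h1] at hij; exact absurd rfl hij
  -- total count
  have hsplit : n0 + n1 = (Finset.univ.filter fun j : ZMod p => φ j = true).card := by
    have e : (Finset.univ.filter fun j : ZMod p => φ j = true ∧ j.val % 2 = 0)
        = (Finset.univ.filter fun j : ZMod p => φ j = true).filter
            fun j => j.val % 2 = 0 := by
      rw [Finset.filter_filter]
    have e' : (Finset.univ.filter fun j : ZMod p => φ j = true ∧ j.val % 2 = 1)
        = (Finset.univ.filter fun j : ZMod p => φ j = true).filter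
            fun j => ¬ j.val % 2 = 0 := by
      rw [Finset.filter_filter]
      exact Finset.filter_congr fun j _ => and_congr_right fun _ => by omega
    rw [hn0def, hn1def, e, e']
    exact Finset.card_filter_add_card_filter_not _
  -- parity classes each have p/2 elements
  have hhalf0 : (Finset.univ.filter fun v : ZMod p => v.val % 2 = 0).card = p / 2 := by
    have hbij : (Finset.univ.filter fun v : ZMod p => v.val % 2 = 0).card
        = (Finset.univ.filter fun v : ZMod p => v.val % 2 = 1).card := by
      refine Finset.card_bij' (fun v _ => v + 1) (fun v _ => v - 1) ?_ ?_ ?_ ?_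
      · intro v hv
        simp only [Finset.mem_filter] at hv ⊢
        refine ⟨Finset.mem_univ _, ?_⟩
        have := hadd1 v
        omega
      · intro v hv
        simp only [Finset.mem_filter] at hv ⊢
        refine ⟨Finset.mem_univ _, ?_⟩
        have := hadd1 (v - 1)
        rw [sub_add_cancel] at this
        omega
      · intro v _; exact add_sub_cancel_right v 1
      · intro v _; exact sub_add_cancel v 1
    have htot : (Finset.univ.filter fun v : ZMod p => v.val % 2 = 0).card
        + (Finset.univ.filter fun v : ZMod p => v.val % 2 = 1).card = p := by
      have e' : (Finset.univ.filter fun v : ZMod p => v.val % 2 = 1)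
          = Finset.univ.filter fun v : ZMod p => ¬ v.val % 2 = 0 := by
        exact Finset.filter_congr fun j _ => by omega
      rw [e', Finset.card_filter_add_card_filter_not, Finset.card_univ, ZMod.card]
    omega
  have hhalf1 : (Finset.univ.filter fun v : ZMod p => v.val % 2 = 1).card = p / 2 := by
    have htot : (Finset.univ.filter fun v : ZMod p => v.val % 2 = 0).card
        + (Finset.univ.filter fun v : ZMod p => v.val % 2 = 1).card = p := by
      have e' : (Finset.univ.filter fun v : ZMod p => v.val % 2 = 1)
          = Finset.univ.filter fun v : ZMod p => ¬ v.val % 2 = 0 := by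
        exact Finset.filter_congr fun j _ => by omega
      rw [e', Finset.card_filter_add_card_filter_not, Finset.card_univ, ZMod.card]
    omega
  by_cases hA : (∃ k : ZMod p, φ k = true ∧ k.val % 2 = 0)
      ∧ (∃ k : ZMod p, φ k = true ∧ k.val % 2 = 1)
  · -- Case (ii)
    obtain ⟨⟨k0, hk0, hk0p⟩, ⟨k1, hk1, hk1p⟩⟩ := hA
    have hA1 := eqB0 k0 hk0 hk0p
    have hA2 := eqB1 k1 hk1 hk1p
    have hfe : (x - y) * ((n1 : ℝ) - n0) = 0 := by ring_nf; linarith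
    have hnR : (n0 : ℝ) = n1 := by
      rcases mul_eq_zero.mp hfe with h | h
      · exact absurd (sub_eq_zero.mp h) hxy
      · linarith [sub_eq_zero.mp h]
    have hn : n0 = n1 := Nat.cast_inj.mp hnR
    have hn0pos : 1 ≤ n0 := by
      have hmem : k0 ∈ Finset.univ.filter
          (fun j : ZMod p => φ j = true ∧ j.val % 2 = 0) :=
        Finset.mem_filter.mpr ⟨Finset.mem_univ _, hk0, hk0p⟩
      have := Finset.card_pos.mpr ⟨k0, hmem⟩
      omega
    obtain ⟨kw, hkw⟩ := hBW.2
    have hb : b = (n0 : ℝ) * (x + y) := by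
      by_cases hkwp : kw.val % 2 = 0
      · have := eqW0 kw hkw hkwp
        rw [← hnR] at this
        linarith
      · have := eqW1 kw hkw (by omega)
        rw [← hnR] at this
        linarith
    have hcast : ((n0 - 1 : ℕ) : ℝ) = (n0 : ℝ) - 1 := by
      rw [Nat.cast_sub hn0pos, Nat.cast_one]
    refine Or.inr ⟨n0 - 1, ?_, ?_, ?_, ?_⟩
    · have hcard : (Finset.univ.filter fun j : ZMod p => φ j = true).card < p := by
        have hss : (Finset.univ.filter fun j : ZMod p => φ j = true) ⊂ Finset.univ :=
          Finset.filter_ssubset.mpr ⟨kw, Finset.mem_univ _, by simp [hkw]⟩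
        have := Finset.card_lt_card hss
        rwa [Finset.card_univ, ZMod.card] at this
      omega
    · rw [hcast]
      rw [← hnR] at hA1
      linear_combination (-1 : ℝ) * hA1
    · rw [hcast, hb]; ring
    · intro k hk
      rw [hOc k, hEc k]
      split_ifs <;> omega
  · -- Case (i)
    obtain ⟨kb, hkb⟩ := hBW.1
    by_cases hc : kb.val % 2 = 0
    · -- all black vertices have even val
      have hno1 : ∀ k : ZMod p, φ k = true → k.val % 2 = 0 := by
        intro k hk
        by_contra h
        exact hA ⟨⟨kb, hkb, hc⟩, ⟨k, hk, by omega⟩⟩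
      have hn1 : n1 = 0 := by
        rw [hn1def, Finset.card_eq_zero, Finset.filter_eq_empty_iff]
        rintro j _ ⟨h1, h2⟩
        have := hno1 j h1
        omega
      have hp1 : (kb + 1).val % 2 = 1 := by have := hadd1 kb; omega
      have hw1 : φ (kb + 1) = false := by
        cases h : φ (kb + 1) with
        | false => rfl
        | true => exact absurd (hno1 _ h) (by omega)
      have hbeq : x * (n0 : ℝ) = b := by
        have := eqW1 (kb + 1) hw1 hp1
        rw [hn1] at this
        push_cast at this
        linarith
      have hn0pos : 1 ≤ n0 := by
        have hmem : kb ∈ Finset.univ.filter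
            (fun j : ZMod p => φ j = true ∧ j.val % 2 = 0) :=
          Finset.mem_filter.mpr ⟨Finset.mem_univ _, hkb, hc⟩
        have := Finset.card_pos.mpr ⟨kb, hmem⟩
        omega
      have hwall : ∀ j : ZMod p, j.val % 2 = 0 → φ j = true := by
        intro j hj
        cases h : φ j with
        | true => rfl
        | false =>
          exfalso
          have h3 := eqW0 j h hj
          rw [hn1] at h3
          push_cast at h3
          have hfe : (x - y) * (n0 : ℝ) = 0 := by linarith
          rcases mul_eq_zero.mp hfe with h' | h'
          · exact hxy (sub_eq_zero.mp h')
          · have : (0 : ℝ) < n0 := by exact_mod_cast hn0pos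
            linarith
      have hn0 : n0 = p / 2 := by
        have e : (Finset.univ.filter fun j : ZMod p => φ j = true ∧ j.val % 2 = 0)
            = Finset.univ.filter fun v : ZMod p => v.val % 2 = 0 := by
          refine Finset.filter_congr fun j _ => ?_
          exact ⟨fun h => h.2, fun h => ⟨hwall j h, h⟩⟩
        rw [hn0def, e, hhalf0]
      refine Or.inl ⟨?_, ?_, ?_⟩
      · intro i heq
        have h1 := hadd1 i
        cases h : φ i with
        | true =>
          have hi := hno1 i h
          have hi1 := hno1 (i + 1) (heq.trans h)
          omega
        | false =>
          have hi : ¬ i.val % 2 = 0 := fun hh => by rw [hwall i hh] at h; exact Bool.noConfusion h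
          have hi1 : ¬ (i + 1).val % 2 = 0 := fun hh => by
            have := hwall (i + 1) hh
            rw [heq, h] at this
            exact Bool.noConfusion this
          omega
      · have := eqB0 kb hkb hc
        rw [hn1, hn0] at this
        push_cast at this
        linear_combination (-1 : ℝ) * this
      · rw [hn0] at hbeq
        linear_combination (-1 : ℝ) * hbeq
    · -- all black vertices have odd val
      have hc1 : kb.val % 2 = 1 := by omega
      have hno0 : ∀ k : ZMod p, φ k = true → k.val % 2 = 1 := by
        intro k hk
        by_contra h
        exact hA ⟨⟨k, hk, by omega⟩, ⟨kb, hkb, hc1⟩⟩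
      have hn0z : n0 = 0 := by
        rw [hn0def, Finset.card_eq_zero, Finset.filter_eq_empty_iff]
        rintro j _ ⟨h1, h2⟩
        have := hno0 j h1
        omega
      have hp0 : (kb + 1).val % 2 = 0 := by have := hadd1 kb; omega
      have hw0' : φ (kb + 1) = false := by
        cases h : φ (kb + 1) with
        | false => rfl
        | true => exact absurd (hno0 _ h) (by omega)
      have hbeq : x * (n1 : ℝ) = b := by
        have := eqW0 (kb + 1) hw0' hp0
        rw [hn0z] at this
        push_cast at this
        linarith
      have hn1pos : 1 ≤ n1 := by
        have hmem : kb ∈ Finset.univ.filter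
            (fun j : ZMod p => φ j = true ∧ j.val % 2 = 1) :=
          Finset.mem_filter.mpr ⟨Finset.mem_univ _, hkb, hc1⟩
        have := Finset.card_pos.mpr ⟨kb, hmem⟩
        omega
      have hwall : ∀ j : ZMod p, j.val % 2 = 1 → φ j = true := by
        intro j hj
        cases h : φ j with
        | true => rfl
        | false =>
          exfalso
          have h3 := eqW1 j h hj
          rw [hn0z] at h3
          push_cast at h3
          have hfe : (x - y) * (n1 : ℝ) = 0 := by linarith
          rcases mul_eq_zero.mp hfe with h' | h'
          · exact hxy (sub_eq_zero.mp h')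
          · have : (0 : ℝ) < n1 := by exact_mod_cast hn1pos
            linarith
      have hn1' : n1 = p / 2 := by
        have e : (Finset.univ.filter fun j : ZMod p => φ j = true ∧ j.val % 2 = 1)
            = Finset.univ.filter fun v : ZMod p => v.val % 2 = 1 := by
          refine Finset.filter_congr fun j _ => ?_
          exact ⟨fun h => h.2, fun h => ⟨hwall j h, h⟩⟩
        rw [hn1def, e, hhalf1]
      refine Or.inl ⟨?_, ?_, ?_⟩
      · intro i heq
        have h1 := hadd1 i
        cases h : φ i with
        | true =>
          have hi := hno0 i h
          have hi1 := hno0 (i + 1) (heq.trans h)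
          omega
        | false =>
          have hi : ¬ i.val % 2 = 1 := fun hh => by rw [hwall i hh] at h; exact Bool.noConfusion h
          have hi1 : ¬ (i + 1).val % 2 = 1 := fun hh => by
            have := hwall (i + 1) hh
            rw [heq, h] at this
            exact Bool.noConfusion this
          omega
      · have := eqB1 kb hkb hc1
        rw [hn0z, hn1'] at this
        push_cast at this
        linear_combination (-1 : ℝ) * this
      · rw [hn1'] at hbeq
        linear_combination (-1 : ℝ) * hbeq
end

section
/- If φ is a non-monochromatic coloring of a Type 7 cycle that is a constant 2-labelling with constants a and b, then either (i) φ is 1-antiperiodic (alternate), a = (p/2−1)y + z and b = (p/2−1)x + t, or (ii) φ is (p/2)-periodic and there exists a natural number α with 0 ≤ α ≤ p/2−1 such that a = α(x+y) + t + z and b = (α+1)(x+y). -/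
/-- Non-trivial constant 2-labellings of Type 7 cycles
(`z (xy)^((p-2)/4) t (yx)^((p-2)/4)`): either `φ` is alternate with
`a = (p/2-1)y + z` and `b = (p/2-1)x + t`, or `φ` is `(p/2)`-periodic with
`a = α(x+y) + t + z` and `b = (α+1)(x+y)` for some `0 ≤ α ≤ p/2 - 1`. -/
theorem type7_constant2Labelling
    (p : ℕ) [NeZero p] (hp : 6 ≤ p) (hp4 : p % 4 = 2)
    (w : ZMod p → ℝ) (z x y t : ℝ) (hxy : x ≠ y) (hxt : x ≠ t)
    (hw0 : w 0 = z) (hwt : w ((p / 2 : ℕ) : ZMod p) = t)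
    (hwx : ∀ i : ℕ, 1 ≤ i → i < p / 2 → Odd i → w (i : ZMod p) = x)
    (hwy : ∀ i : ℕ, 1 ≤ i → i < p / 2 → Even i → w (i : ZMod p) = y)
    (hwsym : ∀ i : ℕ, 1 ≤ i → i < p / 2 →
      w (((p - i : ℕ) : ZMod p)) = w (i : ZMod p))
    (φ : ZMod p → Bool) (hnontriv : ∃ i j : ZMod p, φ i ≠ φ j)
    (a b : ℝ)
    (hlab : ∀ k : ZMod p,
      (φ k = true → (∑ u : ZMod p, if φ (u + k) = true then w u else 0) = a) ∧
      (φ k = false → (∑ u : ZMod p, if φ (u + k) = true then w u else 0) = b)) :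
    ((∀ i : ZMod p, φ (i + 1) ≠ φ i) ∧
      a = (((p / 2 : ℕ) : ℝ) - 1) * y + z ∧
      b = (((p / 2 : ℕ) : ℝ) - 1) * x + t) ∨
    ((∀ i : ZMod p, φ (i + ((p / 2 : ℕ) : ZMod p)) = φ i) ∧
      ∃ α : ℕ, α ≤ p / 2 - 1 ∧
        a = (α : ℝ) * (x + y) + t + z ∧ b = ((α : ℝ) + 1) * (x + y)) := by
  classical
  obtain ⟨q, hq⟩ : ∃ q : ℕ, p = 4 * q + 2 := ⟨p / 4, by omega⟩
  have hp2 : (2 : ℕ) ∣ p := ⟨2 * q + 1, by omega⟩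
  have hhalf : p / 2 = 2 * q + 1 := by omega
  set h : ZMod p := ((p / 2 : ℕ) : ZMod p) with hh
  set π : ZMod p →+* ZMod 2 := ZMod.castHom hp2 (ZMod 2) with hπdef
  have htwo : (2 : ZMod 2) = 0 := by decide
  have hval : ∀ d : ZMod p, π d = ((d.val : ℕ) : ZMod 2) := by
    intro d
    rw [hπdef, ZMod.castHom_apply, ZMod.natCast_val]
  have cast2 : ∀ n : ℕ, ((n : ZMod 2) = 1 ↔ n % 2 = 1) := by
    intro n
    rw [← ZMod.natCast_mod n 2]
    rcases Nat.mod_two_eq_zero_or_one n with h2 | h2 <;> rw [h2] <;> simp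
  have hπh : π h = 1 := by
    rw [hh, map_natCast, hhalf]
    push_cast
    rw [htwo]
    ring
  have hhh : h + h = 0 := by
    rw [hh, ← Nat.cast_add, (by omega : p / 2 + p / 2 = p), ZMod.natCast_self]
  have hdval : ∀ d : ZMod p, ((d.val : ℕ) : ZMod p) = d := fun d => by
    rw [ZMod.natCast_val, ZMod.cast_id]
  have hvalh : h.val = p / 2 := by rw [hh, ZMod.val_natCast_of_lt (by omega)]
  -- decomposition of the weight function
  have hwdec : ∀ d : ZMod p, w d = (if π d = 1 then x else y)
      + (if d = 0 then z - y else 0) + (if d = h then t - x else 0) := by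
    intro d
    have hv : d.val < p := ZMod.val_lt d
    have hd : ((d.val : ℕ) : ZMod p) = d := hdval d
    have hπd : (π d = 1) ↔ d.val % 2 = 1 := by rw [hval]; exact cast2 _
    have hd0 : (d = 0) ↔ d.val = 0 := (ZMod.val_eq_zero d).symm
    have hdh : (d = h) ↔ d.val = p / 2 := by
      constructor
      · intro e; rw [e, hvalh]
      · intro e; rw [← hd, e, ← hh]
    rcases Nat.lt_or_ge d.val 1 with h0 | h1
    · have e0 : d = 0 := hd0.mpr (by omega)
      subst e0
      have c1 : ¬ (π (0 : ZMod p) = 1) := by rw [map_zero]; decide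
      have c3 : ¬ ((0 : ZMod p) = h) := by
        intro e
        rw [← e, ZMod.val_zero] at hvalh
        omega
      rw [hw0, if_neg c1, if_pos rfl, if_neg c3]
      ring
    · rcases lt_trichotomy d.val (p / 2) with hlt | heq | hgt
      · have c2 : ¬ d = 0 := by rw [hd0]; omega
        have c3 : ¬ d = h := by rw [hdh]; omega
        rcases Nat.even_or_odd d.val with he | ho
        · have hthis := hwy d.val h1 hlt he
          rw [hd] at hthis
          have hpar : ¬ (π d = 1) := by
            rw [hπd]
            have := Nat.even_iff.mp he
            omega
          rw [hthis, if_neg hpar, if_neg c2, if_neg c3]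
          ring
        · have hthis := hwx d.val h1 hlt ho
          rw [hd] at hthis
          have hpar : π d = 1 := hπd.mpr (Nat.odd_iff.mp ho)
          rw [hthis, if_pos hpar, if_neg c2, if_neg c3]
          ring
      · have ed : d = h := hdh.mpr heq
        subst ed
        have c2 : ¬ h = 0 := by
          intro e
          rw [e, ZMod.val_zero] at hvalh
          omega
        rw [hwt, if_pos hπh, if_neg c2, if_pos rfl]
        ring
      · have h1i : 1 ≤ p - d.val := by omega
        have h2i : p - d.val < p / 2 := by omega
        have hsym := hwsym (p - d.val) h1i h2i
        have hpi : p - (p - d.val) = d.val := by omega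
        rw [hpi, hd] at hsym
        have c2 : ¬ d = 0 := by rw [hd0]; omega
        have c3 : ¬ d = h := by rw [hdh]; omega
        rcases Nat.even_or_odd (p - d.val) with he | ho
        · have hthis := hwy _ h1i h2i he
          rw [hthis] at hsym
          have hpar : ¬ (π d = 1) := by
            rw [hπd]
            have := Nat.even_iff.mp he
            omega
          rw [hsym, if_neg hpar, if_neg c2, if_neg c3]
          ring
        · have hthis := hwx _ h1i h2i ho
          rw [hthis] at hsym
          have hpar : π d = 1 := by
            rw [hπd]
            have := Nat.odd_iff.mp ho
            omega
          rw [hsym, if_pos hpar, if_neg c2, if_neg c3]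
          ring
  -- counting functions
  set Nn : ZMod 2 → ℕ := fun j => ∑ v : ZMod p, if φ v = true ∧ π v = j then 1 else 0 with hNn
  have hNdef : ∀ j : ZMod 2,
      ((Nn j : ℕ) : ℝ) = ∑ v : ZMod p, if φ v = true ∧ π v = j then (1 : ℝ) else 0 := by
    intro j
    rw [hNn]
    push_cast
    rfl
  -- the master equation
  have master : ∀ k : ZMod p,
      (if φ k = true then a else b)
        = x * ((Nn (1 + π k) : ℕ) : ℝ) + y * ((Nn (π k) : ℕ) : ℝ)
          + (if φ k = true then z - y else 0)
          + (if φ (k + h) = true then t - x else 0) := by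
    intro k
    have hS : (∑ u : ZMod p, if φ (u + k) = true then w u else 0)
        = if φ k = true then a else b := by
      cases hfk : φ k
      · simp only [Bool.false_eq_true, if_false]
        exact (hlab k).2 hfk
      · simp only [if_true]
        exact (hlab k).1 hfk
    rw [← hS]
    have h1 : (∑ u : ZMod p, if φ (u + k) = true then w u else 0)
        = ∑ v : ZMod p, if φ v = true then w (v - k) else 0 :=
      Fintype.sum_equiv (Equiv.addRight k) _ _ (fun u => by simp)
    rw [h1]
    have h2 : ∀ v : ZMod p, (if φ v = true then w (v - k) else 0)
        = (x * (if φ v = true ∧ π v = 1 + π k then (1 : ℝ) else 0)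
           + y * (if φ v = true ∧ π v = π k then (1 : ℝ) else 0))
          + ((if v = k then (if φ v = true then z - y else 0) else 0)
          + (if v = k + h then (if φ v = true then t - x else 0) else 0)) := by
      intro v
      have e0 : (v - k = 0) ↔ v = k := sub_eq_zero
      have eh : (v - k = h) ↔ v = k + h := by
        rw [sub_eq_iff_eq_add, add_comm]
      have ep : (π (v - k) = 1) ↔ π v = 1 + π k := by
        rw [map_sub, sub_eq_iff_eq_add, add_comm]
      have hzf : ∀ c d : ZMod 2, ¬ (c = 1 + d ∧ c = d) := by decide
      by_cases hfv : φ v = true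
      · rw [hwdec (v - k)]
        simp only [hfv, if_true, true_and]
        by_cases hv1 : π v = 1 + π k
        · have hv2 : ¬ (π v = π k) := fun e => hzf (π v) (π k) ⟨hv1, e⟩
          rw [if_pos (ep.mpr hv1), if_pos hv1, if_neg hv2]
          simp only [e0, eh]
          ring
        · have hv2 : π v = π k := by
            rcases (by decide : ∀ c d : ZMod 2, c = 1 + d ∨ c = d) (π v) (π k) with hc | hc
            · exact absurd hc hv1
            · exact hc
          rw [if_neg (fun e => hv1 (ep.mp e)), if_neg hv1, if_pos hv2]
          simp only [e0, eh]
          ring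
      · simp [hfv]
    rw [Finset.sum_congr rfl (fun v _ => h2 v), Finset.sum_add_distrib,
      Finset.sum_add_distrib, Finset.sum_add_distrib, ← Finset.mul_sum, ← Finset.mul_sum,
      Finset.sum_ite_eq' Finset.univ k, Finset.sum_ite_eq' Finset.univ (k + h),
      ← hNdef, ← hNdef]
    simp only [Finset.mem_univ, if_true]
    ring
  -- class sizes
  have hclass : ∀ j : ZMod 2, (∑ v : ZMod p, if π v = j then (1 : ℕ) else 0) = p / 2 := by
    intro j
    have hre : (∑ v : ZMod p, if π (v + h) = j then (1 : ℕ) else 0)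
        = ∑ v : ZMod p, if π v = j then (1 : ℕ) else 0 :=
      Fintype.sum_equiv (Equiv.addRight h) _ _ (fun v => rfl)
    have hsum : (∑ v : ZMod p, ((if π v = j then (1 : ℕ) else 0)
        + (if π (v + h) = j then (1 : ℕ) else 0))) = p := by
      have hpt : ∀ v : ZMod p, (if π v = j then (1 : ℕ) else 0)
          + (if π (v + h) = j then (1 : ℕ) else 0) = 1 := by
        intro v
        rw [map_add, hπh]
        exact (by decide : ∀ c jj : ZMod 2,
          (if c = jj then (1 : ℕ) else 0) + (if c + 1 = jj then 1 else 0) = 1) (π v) j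
      rw [Finset.sum_congr rfl (fun v _ => hpt v), Finset.sum_const, smul_eq_mul, mul_one,
        Finset.card_univ, ZMod.card]
    rw [Finset.sum_add_distrib, hre] at hsum
    omega
  have hNle : ∀ j : ZMod 2, Nn j ≤ p / 2 := by
    intro j
    rw [← hclass j, hNn]
    refine Finset.sum_le_sum (fun v _ => ?_)
    by_cases h2 : π v = j
    · rw [if_pos h2]
      split_ifs <;> omega
    · rw [if_neg h2, if_neg (fun hh => h2 hh.2)]
  have hNsplit : Nn 0 + Nn 1 = ∑ v : ZMod p, (if φ v = true then (1 : ℕ) else 0) := by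
    rw [hNn, ← Finset.sum_add_distrib]
    refine Finset.sum_congr rfl (fun v _ => ?_)
    exact (by decide : ∀ (c : ZMod 2) (bb : Bool),
      (if bb = true ∧ c = 0 then (1 : ℕ) else 0) + (if bb = true ∧ c = 1 then 1 else 0)
        = (if bb = true then 1 else 0)) (π v) (φ v)
  -- transfer lemma
  have L1 : ∀ k k' : ZMod p, π k = π k' → φ k = φ k' → φ (k + h) = φ (k' + h) := by
    intro k k' hπe hφe
    have m1 := master k
    have m2 := master k'
    rw [hπe, hφe] at m1
    have heq : (if φ (k + h) = true then t - x else 0)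
        = (if φ (k' + h) = true then t - x else 0) := by linarith
    by_contra hne
    cases hb : φ (k + h) <;> cases hb' : φ (k' + h) <;> rw [hb, hb'] at heq hne
    · exact hne rfl
    · rw [if_neg (by simp), if_pos rfl] at heq
      exact hxt (by linarith)
    · rw [if_pos rfl, if_neg (by simp)] at heq
      exact hxt (by linarith)
    · exact hne rfl
  have hπadd : ∀ k : ZMod p, π (k + h) = π k + 1 := fun k => by rw [map_add, hπh]
  have hcancel : ∀ k : ZMod p, k + h + h = k := fun k => by
    rw [add_assoc, hhh, add_zero]
  -- dichotomy
  have dich : (∀ k : ZMod p, φ (k + h) = φ k) ∨ (∀ k : ZMod p, φ (k + h) ≠ φ k) := by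
    by_contra hc
    push_neg at hc
    obtain ⟨⟨k₂, hk₂⟩, k₁, hk₁⟩ := hc
    have hk2' : ∀ m : ZMod p, φ (m + h) ≠ φ m → π m = π k₁ → False := by
      intro m hm hπm
      by_cases he : φ m = φ k₁
      · have := L1 m k₁ hπm he
        rw [hk₁, ← he] at this
        exact hm this
      · have hφmh : φ (m + h) = φ (k₁ + h) := by
          rw [hk₁]
          cases h1 : φ (m + h) <;> cases h2 : φ m <;> cases h3 : φ k₁ <;>
            simp only [h1, h2] at hm <;> simp only [h2, h3] at he <;>
            first | rfl | exact absurd rfl hm | exact absurd rfl he |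
              exact absurd trivial hm | exact absurd trivial he
        have := L1 (m + h) (k₁ + h) (by rw [hπadd, hπadd, hπm]) hφmh
        rw [hcancel, hcancel] at this
        exact he this
    by_cases hπ2 : π k₂ = π k₁
    · exact hk2' k₂ hk₂ hπ2
    · refine hk2' (k₂ + h) ?_ ?_
      · rw [hcancel]
        exact fun e => hk₂ e.symm
      · rw [hπadd]
        exact (by decide : ∀ c d : ZMod 2, c ≠ d → c + 1 = d) _ _ hπ2
  have f01 : (0 + 1 : ZMod 2) = 1 := by decide
  have f11 : (1 + 1 : ZMod 2) = 0 := by decide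
  have f10 : (1 + 0 : ZMod 2) = 1 := by decide
  have zadd : ∀ c : ZMod 2, 1 + (c + 1) = c := by decide
  rcases dich with hPer | hAnti
  · -- periodic case
    right
    have shift : ∀ (v : ZMod p) (j : ZMod 2), ∃ m : ZMod p, π m = j ∧ φ m = φ v := by
      intro v j
      by_cases hv : π v = j
      · exact ⟨v, hv, rfl⟩
      · exact ⟨v + h, by
          rw [hπadd]
          exact (by decide : ∀ c d : ZMod 2, c ≠ d → c + 1 = d) _ _ hv, hPer v⟩
    obtain ⟨i0, j0, hij⟩ := hnontriv
    have exColor : ∀ (j : ZMod 2) (c : Bool), ∃ m, π m = j ∧ φ m = c := by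
      intro j c
      by_cases hc : φ i0 = c
      · obtain ⟨m, hm1, hm2⟩ := shift i0 j
        exact ⟨m, hm1, hm2.trans hc⟩
      · have hjc : φ j0 = c :=
          (by decide : ∀ b1 b2 cc : Bool, ¬b1 = b2 → ¬b1 = cc → b2 = cc) _ _ _ hij hc
        obtain ⟨m, hm1, hm2⟩ := shift j0 j
        exact ⟨m, hm1, hm2.trans hjc⟩
    obtain ⟨w0, hw01, hw02⟩ := exColor 0 false
    obtain ⟨w1, hw11, hw12⟩ := exColor 1 false
    obtain ⟨b0, hb01, hb02⟩ := exColor 0 true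
    have m0 := master w0
    have m1 := master w1
    have mb := master b0
    simp only [hPer w0, hw01, hw02, Bool.false_eq_true, if_false, add_zero, f01] at m0
    simp only [hPer w1, hw11, hw12, Bool.false_eq_true, if_false, add_zero, f11] at m1
    simp only [hPer b0, hb01, hb02, eq_self_iff_true, if_true, add_zero, f01] at mb
    have hNeq : ((Nn 0 : ℕ) : ℝ) = ((Nn 1 : ℕ) : ℝ) := by
      have hf : (x - y) * (((Nn 1 : ℕ) : ℝ) - ((Nn 0 : ℕ) : ℝ)) = 0 := by linarith
      rcases mul_eq_zero.mp hf with hc | hc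
      · exact absurd (by linarith) hxy
      · linarith
    have hN1 : 1 ≤ Nn 0 := by
      have h1 : (if φ b0 = true ∧ π b0 = 0 then (1 : ℕ) else 0) ≤ Nn 0 :=
        Finset.single_le_sum
          (f := fun v : ZMod p => if φ v = true ∧ π v = 0 then (1 : ℕ) else 0)
          (fun i _ => Nat.zero_le _) (Finset.mem_univ b0)
      rw [if_pos (show φ b0 = true ∧ π b0 = 0 from ⟨hb02, hb01⟩)] at h1
      exact h1
    rw [← hNeq] at m0 mb
    have hcast : ((Nn 0 - 1 : ℕ) : ℝ) = ((Nn 0 : ℕ) : ℝ) - 1 := by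
      rw [Nat.cast_sub hN1, Nat.cast_one]
    refine ⟨hPer, Nn 0 - 1, by have := hNle 0; omega, ?_, ?_⟩
    · rw [hcast]
      linear_combination mb
    · rw [hcast]
      linear_combination m0
  · -- antiperiodic case
    left
    have hB : 2 * (∑ v : ZMod p, if φ v = true then (1 : ℕ) else 0) = p := by
      have hre : (∑ v : ZMod p, if φ (v + h) = true then (1 : ℕ) else 0)
          = ∑ v : ZMod p, if φ v = true then (1 : ℕ) else 0 :=
        Fintype.sum_equiv (Equiv.addRight h) _ _ (fun v => rfl)
      have hpt : ∀ v : ZMod p, (if φ v = true then (1 : ℕ) else 0)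
          + (if φ (v + h) = true then 1 else 0) = 1 := by
        intro v
        have hv := hAnti v
        cases h1 : φ v <;> cases h2 : φ (v + h) <;> rw [h2, h1] at hv <;>
          first | decide | exact absurd rfl hv
      have hsum : (∑ v : ZMod p, ((if φ v = true then (1 : ℕ) else 0)
          + (if φ (v + h) = true then 1 else 0))) = p := by
        rw [Finset.sum_congr rfl (fun v _ => hpt v), Finset.sum_const, smul_eq_mul, mul_one,
          Finset.card_univ, ZMod.card]
      rw [Finset.sum_add_distrib, hre] at hsum
      omega
    have hanti' : ∀ v : ZMod p, φ v = true → φ (v + h) = false := by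
      intro v hv
      have ha := hAnti v
      cases h2 : φ (v + h)
      · rfl
      · rw [h2, hv] at ha
        exact absurd rfl ha
    have hanti'' : ∀ v : ZMod p, φ v = false → φ (v + h) = true := by
      intro v hv
      have ha := hAnti v
      cases h2 : φ (v + h)
      · rw [h2, hv] at ha
        exact absurd rfl ha
      · rfl
    by_cases hbi : ∃ k k' : ZMod p, π k = π k' ∧ φ k ≠ φ k'
    · exfalso
      obtain ⟨k, k', hπe, hφe⟩ := hbi
      obtain ⟨kb, kw, hπb, hπw, hbB, hwW⟩ : ∃ kb kw : ZMod p,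
          π kb = π k ∧ π kw = π k ∧ φ kb = true ∧ φ kw = false := by
        cases h1 : φ k <;> cases h2 : φ k'
        · exact absurd (h1.trans h2.symm) hφe
        · exact ⟨k', k, hπe.symm, rfl, h2, h1⟩
        · exact ⟨k, k', rfl, hπe.symm, h1, h2⟩
        · exact absurd (h1.trans h2.symm) hφe
      have hw1W : φ (kb + h) = false := hanti' kb hbB
      have hwhB : φ (kw + h) = true := hanti'' kw hwW
      have m0 := master kw
      simp only [hwW, hwhB, Bool.false_eq_true, if_false, eq_self_iff_true, if_true,
        add_zero, hπw] at m0
      have m1 := master (kb + h)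
      rw [hcancel] at m1
      simp only [hw1W, hbB, Bool.false_eq_true, if_false, eq_self_iff_true, if_true,
        add_zero, hπadd, hπb, zadd] at m1
      have hcomm : (1 : ZMod 2) + π k = π k + 1 := add_comm _ _
      rw [hcomm] at m0
      have hNeqr : ((Nn (π k + 1) : ℕ) : ℝ) = ((Nn (π k) : ℕ) : ℝ) := by
        have hf : (x - y) * (((Nn (π k + 1) : ℕ) : ℝ) - ((Nn (π k) : ℕ) : ℝ)) = 0 := by
          linarith
        rcases mul_eq_zero.mp hf with hc | hc
        · exact absurd (by linarith) hxy
        · linarith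
      have hNeqn : Nn (π k + 1) = Nn (π k) := Nat.cast_injective hNeqr
      have h01 : Nn 0 = Nn 1 := by
        rcases (by decide : ∀ c : ZMod 2, c = 0 ∨ c = 1) (π k) with e | e <;>
          rw [e] at hNeqn
        · rw [f01] at hNeqn
          exact hNeqn.symm
        · rw [f11] at hNeqn
          exact hNeqn
      omega
    · push_neg at hbi
      have hAlt : ∀ i : ZMod p, φ (i + 1) ≠ φ i := by
        intro i he
        obtain ⟨i0, j0, hij⟩ := hnontriv
        apply hij
        have key : ∀ jv : ZMod p, φ jv = φ i := by
          intro jv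
          by_cases hc : π jv = π i
          · exact hbi jv i hc
          · have hπ1 : π jv = π (i + 1) := by
              rw [map_add, map_one]
              exact (by decide : ∀ c d : ZMod 2, c ≠ d → c = d + 1) _ _ hc
            exact (hbi jv (i + 1) hπ1).trans he
        rw [key i0, key j0]
      obtain ⟨i0, j0, hij⟩ := hnontriv
      obtain ⟨kb, hkb⟩ : ∃ kb : ZMod p, φ kb = true := by
        cases h1 : φ i0 <;> cases h2 : φ j0
        · exact absurd (h1.trans h2.symm) hij
        · exact ⟨j0, h2⟩
        · exact ⟨i0, h1⟩
        · exact absurd (h1.trans h2.symm) hij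
      have hbw : φ (kb + h) = false := hanti' kb hkb
      have hNb : Nn (π kb) = p / 2 := by
        rw [← hclass (π kb)]
        simp only [hNn]
        refine Finset.sum_congr rfl (fun v _ => ?_)
        by_cases hc : π v = π kb
        · rw [if_pos ⟨(hbi v kb hc).trans hkb, hc⟩, if_pos hc]
        · rw [if_neg (fun e => hc e.2), if_neg hc]
      have hNw : Nn (π kb + 1) = 0 := by
        simp only [hNn]
        refine Finset.sum_eq_zero (fun v _ => ?_)
        rw [if_neg ?_]
        rintro ⟨h1, h2⟩
        have hv := (hbi v (kb + h) (by rw [hπadd]; exact h2)).trans hbw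
        rw [h1] at hv
        exact absurd hv (by decide)
      have hc1 : (1 : ZMod 2) + π kb = π kb + 1 := add_comm _ _
      have mb := master kb
      simp only [hkb, eq_self_iff_true, if_true, hbw, Bool.false_eq_true, if_false,
        add_zero] at mb
      rw [hc1, hNw, hNb] at mb
      push_cast at mb
      have mw := master (kb + h)
      rw [hcancel] at mw
      simp only [hbw, Bool.false_eq_true, if_false, hkb, eq_self_iff_true, if_true,
        add_zero, hπadd, zadd] at mw
      rw [hNw, hNb] at mw
      push_cast at mw
      exact ⟨hAlt, by linear_combination mb, by linear_combination mw⟩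
end

section
/- If φ is a non-monochromatic coloring of a Type 8 cycle that is a constant 2-labelling with constants a and b, then one of the following holds: (i) φ is 1-antiperiodic (alternate), a = (p/2−2)y + z + t and b = (p/2)x; (ii) φ is (p/2)-periodic and there exists a natural number α with 0 ≤ α ≤ p/4−1 such that a = (2α+2)x + 2αy + z + t and b = (2α+2)(x+y); (iii) φ is (p/2)-antiperiodic, a = (p/4)x + (p/4−1)y + z and b = (p/4)x + (p/4−1)y + t; (iv) t = (p/4)x + (1−p/4)y, either φ or its complementary coloring is a rotation (by some k ∈ ZMod p) of a coloring ψ satisfying ψ(i) = ψ(i+p/2) = black for every even i with 0 ≤ i < p/2 and ψ(i) ≠ ψ(i+p/2) for every odd i with 0 ≤ i < p/2, and either (a = (p/2)x + (p/4−1)y + z and b = (3p/4)x) or (a = (p/4−1)y + z and b = (p/4)x). -/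
set_option maxHeartbeats 1000000 in
/-- Non-trivial constant 2-labellings of Type 8 cycles
(`z (xy)^((p-4)/4) x t x (yx)^((p-4)/4)`): one of four cases holds —
alternate, `(p/2)`-periodic, `(p/2)`-antiperiodic, or (when
`t = (p/4)x + (1-p/4)y`) a rotation, up to complement, of a special coloring. -/
theorem type8_constant2Labelling
    (p : ℕ) [NeZero p] (hp : 8 ≤ p) (hp4 : p % 4 = 0)
    (w : ZMod p → ℝ) (z x y t : ℝ) (hxy : x ≠ y) (hyt : y ≠ t)
    (hw0 : w 0 = z) (hwt : w ((p / 2 : ℕ) : ZMod p) = t)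
    (hwx : ∀ i : ℕ, 1 ≤ i → i < p / 2 → Odd i → w (i : ZMod p) = x)
    (hwy : ∀ i : ℕ, 1 ≤ i → i < p / 2 → Even i → w (i : ZMod p) = y)
    (hwsym : ∀ i : ℕ, 1 ≤ i → i < p / 2 →
      w (((p - i : ℕ) : ZMod p)) = w (i : ZMod p))
    (φ : ZMod p → Bool) (hnontriv : ∃ i j : ZMod p, φ i ≠ φ j)
    (a b : ℝ)
    (hlab : ∀ k : ZMod p,
      (φ k = true → (∑ u : ZMod p, if φ (u + k) = true then w u else 0) = a) ∧
      (φ k = false → (∑ u : ZMod p, if φ (u + k) = true then w u else 0) = b)) :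
    -- (i) alternate
    ((∀ i : ZMod p, φ (i + 1) ≠ φ i) ∧
      a = (((p / 2 : ℕ) : ℝ) - 2) * y + z + t ∧ b = ((p / 2 : ℕ) : ℝ) * x) ∨
    -- (ii) (p/2)-periodic
    ((∀ i : ZMod p, φ (i + ((p / 2 : ℕ) : ZMod p)) = φ i) ∧
      ∃ α : ℕ, α ≤ p / 4 - 1 ∧
        a = (2 * (α : ℝ) + 2) * x + 2 * (α : ℝ) * y + z + t ∧
        b = (2 * (α : ℝ) + 2) * (x + y)) ∨
    -- (iii) (p/2)-antiperiodic
    ((∀ i : ZMod p, φ (i + ((p / 2 : ℕ) : ZMod p)) ≠ φ i) ∧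
      a = ((p / 4 : ℕ) : ℝ) * x + (((p / 4 : ℕ) : ℝ) - 1) * y + z ∧
      b = ((p / 4 : ℕ) : ℝ) * x + (((p / 4 : ℕ) : ℝ) - 1) * y + t) ∨
    -- (iv) special case
    (t = ((p / 4 : ℕ) : ℝ) * x + (1 - ((p / 4 : ℕ) : ℝ)) * y ∧
      (∃ (ψ : ZMod p → Bool) (k : ZMod p),
        (∀ i : ℕ, i < p / 2 → Even i →
          ψ (i : ZMod p) = true ∧
          ψ ((i : ZMod p) + ((p / 2 : ℕ) : ZMod p)) = true) ∧
        (∀ i : ℕ, i < p / 2 → Odd i →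
          ψ (i : ZMod p) ≠ ψ ((i : ZMod p) + ((p / 2 : ℕ) : ZMod p))) ∧
        ((∀ i : ZMod p, φ i = ψ (i + k)) ∨ (∀ i : ZMod p, (!φ i) = ψ (i + k)))) ∧
      ((a = ((p / 2 : ℕ) : ℝ) * x + (((p / 4 : ℕ) : ℝ) - 1) * y + z ∧
          b = ((3 * p / 4 : ℕ) : ℝ) * x) ∨
        (a = (((p / 4 : ℕ) : ℝ) - 1) * y + z ∧ b = ((p / 4 : ℕ) : ℝ) * x))) := by
  classical
  obtain ⟨q, hq⟩ : 4 ∣ p := Nat.dvd_of_mod_eq_zero hp4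
  haveI : Fact (1 < p) := ⟨by omega⟩
  set N : ZMod p := ((p / 2 : ℕ) : ZMod p) with hNdef
  have hq2 : 2 ≤ q := by omega
  have hNval : N.val = p / 2 := ZMod.val_natCast_of_lt (by omega)
  have hNN : ∀ v : ZMod p, v + N + N = v := by
    intro v
    have h : N + N = 0 := by
      rw [hNdef, ← Nat.cast_add, show p / 2 + p / 2 = p by omega, ZMod.natCast_self]
    rw [add_assoc, h, add_zero]
  have parity_add : ∀ v u : ZMod p, (Even ((v + u).val) ↔ (Even v.val ↔ Even u.val)) := by
    intro v u
    rw [ZMod.val_add, Nat.even_iff, Nat.even_iff, Nat.even_iff,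
      Nat.mod_mod_of_dvd _ (show (2:ℕ) ∣ p by omega)]
    omega
  have hNeven : Even N.val := by rw [hNval]; exact ⟨q, by omega⟩
  have h0even : Even ((0 : ZMod p).val) := by rw [ZMod.val_zero]; exact Even.zero
  have h1odd : ¬ Even ((1 : ZMod p).val) := by rw [ZMod.val_one]; simp
  have parN : ∀ v : ZMod p, Even ((v + N).val) ↔ Even v.val := fun v => by
    rw [parity_add]; tauto
  have par1 : ∀ v : ZMod p, Even ((v + 1).val) ↔ ¬ Even v.val := fun v => by
    rw [parity_add]; tauto
  -- the weight function explicitly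
  have hwform : ∀ u : ZMod p, w u =
      (if Even u.val then y else x)
        + ((if u = 0 then z - y else 0) + (if u = N then t - y else 0)) := by
    intro u
    have hN0 : N ≠ 0 := by
      intro h
      have := congrArg ZMod.val h
      rw [hNval, ZMod.val_zero] at this
      omega
    by_cases h0 : u = 0
    · subst h0
      rw [hw0, if_pos h0even, if_pos rfl, if_neg (Ne.symm hN0)]
      ring
    by_cases hNu : u = N
    · subst hNu
      rw [hwt, if_pos hNeven, if_neg hN0, if_pos rfl]
      ring
    rw [if_neg h0, if_neg hNu, add_zero, add_zero]
    have hvlt : u.val < p := ZMod.val_lt u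
    have hv0 : u.val ≠ 0 := fun h => h0 (by rwa [← ZMod.val_eq_zero])
    have hvN : u.val ≠ p / 2 := by
      intro h
      apply hNu
      have : ((u.val : ℕ) : ZMod p) = ((p / 2 : ℕ) : ZMod p) := by rw [h]
      rwa [ZMod.natCast_val, ZMod.cast_id] at this
    rcases Nat.lt_or_ge u.val (p / 2) with hlt | hge
    · by_cases hpar : Even u.val
      · rw [if_pos hpar]
        have h := hwy u.val (by omega) hlt hpar
        rwa [ZMod.natCast_val, ZMod.cast_id] at h
      · rw [if_neg hpar]
        have h := hwx u.val (by omega) hlt (Nat.not_even_iff_odd.mp hpar)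
        rwa [ZMod.natCast_val, ZMod.cast_id] at h
    · have hgt : p / 2 < u.val := by omega
      have h1 : 1 ≤ p - u.val := by omega
      have h2 : p - u.val < p / 2 := by omega
      have hsy := hwsym (p - u.val) h1 h2
      rw [show p - (p - u.val) = u.val by omega, ZMod.natCast_val, ZMod.cast_id] at hsy
      have hpar2 : (p - u.val) % 2 = u.val % 2 := by omega
      by_cases hpar : Even u.val
      · rw [if_pos hpar, hsy]
        exact hwy _ h1 h2 (by rw [Nat.even_iff, hpar2, ← Nat.even_iff]; exact hpar)
      · rw [if_neg hpar, hsy]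
        exact hwx _ h1 h2 (by rw [Nat.odd_iff, hpar2, ← Nat.odd_iff]; exact Nat.not_even_iff_odd.mp hpar)

  -- parity classes and black counts
  set E : Finset (ZMod p) := Finset.univ.filter (fun v => Even v.val) with hEdef
  set O : Finset (ZMod p) := Finset.univ.filter (fun v => ¬ Even v.val) with hOdef
  set EB : Finset (ZMod p) := E.filter (fun v => φ v = true) with hEBdef
  set EW : Finset (ZMod p) := E.filter (fun v => ¬ φ v = true) with hEWdef
  set OB : Finset (ZMod p) := O.filter (fun v => φ v = true) with hOBdef
  set OW : Finset (ZMod p) := O.filter (fun v => ¬ φ v = true) with hOWdef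
  have memEB : ∀ v : ZMod p, v ∈ EB ↔ (Even v.val ∧ φ v = true) := by
    intro v; simp [hEBdef, hEdef, Finset.mem_filter]
  have memEW : ∀ v : ZMod p, v ∈ EW ↔ (Even v.val ∧ φ v = false) := by
    intro v; simp [hEWdef, hEdef, Finset.mem_filter]
  have memOB : ∀ v : ZMod p, v ∈ OB ↔ (¬ Even v.val ∧ φ v = true) := by
    intro v; simp [hOBdef, hOdef, Finset.mem_filter]
  have memOW : ∀ v : ZMod p, v ∈ OW ↔ (¬ Even v.val ∧ φ v = false) := by
    intro v; simp [hOWdef, hOdef, Finset.mem_filter]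
  have hcardEO : E.card + O.card = p := by
    rw [hEdef, hOdef, Finset.card_filter_add_card_filter_not,
      Finset.card_univ, ZMod.card]
  have hEOcard : E.card = O.card := by
    refine Finset.card_nbij' (fun v => v + 1) (fun v => v - 1) ?_ ?_ ?_ ?_
    · intro v hv
      rw [hEdef, Finset.mem_coe, Finset.mem_filter] at hv
      rw [hOdef, Finset.mem_coe, Finset.mem_filter]
      exact ⟨Finset.mem_univ _, by rw [par1]; tauto⟩
    · intro v hv
      rw [hOdef, Finset.mem_coe, Finset.mem_filter] at hv
      rw [hEdef, Finset.mem_coe, Finset.mem_filter]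
      refine ⟨Finset.mem_univ _, ?_⟩
      have := par1 (v - 1)
      rw [sub_add_cancel] at this
      tauto
    · intro v _; ring
    · intro v _; ring
  have hEcard : E.card = p / 2 := by omega
  have hEBW : EB.card + EW.card = p / 2 := by
    rw [hEBdef, hEWdef, Finset.card_filter_add_card_filter_not, hEcard]
  have hOBW : OB.card + OW.card = p / 2 := by
    rw [hOBdef, hOWdef, Finset.card_filter_add_card_filter_not]
    omega
  -- the sum formula
  have hS : ∀ k : ZMod p, (∑ u : ZMod p, if φ (u + k) = true then w u else 0)
      = (if Even k.val then x * (OB.card : ℝ) + y * (EB.card : ℝ)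
          else x * (EB.card : ℝ) + y * (OB.card : ℝ))
        + (if φ k = true then z - y else 0)
        + (if φ (k + N) = true then t - y else 0) := by
    intro k
    have hsplit : ∀ u : ZMod p, (if φ (u + k) = true then w u else 0)
        = (if φ (u + k) = true then (if Even u.val then y else x) else 0)
          + ((if φ (u + k) = true then (if u = 0 then z - y else 0) else 0)
          + (if φ (u + k) = true then (if u = N then t - y else 0) else 0)) := by
      intro u
      by_cases h : φ (u + k) = true <;> simp [h, hwform u]
    rw [Finset.sum_congr rfl (fun u _ => hsplit u), Finset.sum_add_distrib,
      Finset.sum_add_distrib]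
    have e1 : (∑ u : ZMod p, if φ (u + k) = true then (if u = 0 then z - y else 0) else 0)
        = (if φ k = true then z - y else 0) := by
      rw [Finset.sum_eq_single (0 : ZMod p)]
      · simp
      · intro u _ hu; simp [hu]
      · simp
    have e2 : (∑ u : ZMod p, if φ (u + k) = true then (if u = N then t - y else 0) else 0)
        = (if φ (k + N) = true then t - y else 0) := by
      rw [Finset.sum_eq_single N]
      · rw [add_comm N k]; simp
      · intro u _ hu; simp [hu]
      · simp
    have e3 : (∑ u : ZMod p, if φ (u + k) = true then (if Even u.val then y else x) else 0)
        = (if Even k.val then x * (OB.card : ℝ) + y * (EB.card : ℝ)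
            else x * (EB.card : ℝ) + y * (OB.card : ℝ)) := by
      rw [show (∑ u : ZMod p, if φ (u + k) = true then (if Even u.val then y else x) else 0)
          = ∑ v : ZMod p, (if φ v = true then (if Even ((v - k).val) then y else x) else 0) from
        (Fintype.sum_equiv (Equiv.addRight k) _ _ (fun v => by
          simp only [Equiv.coe_addRight, add_sub_cancel_right]))]
      have hsum2 : ∀ (c d : ℝ), (∑ v : ZMod p, (if φ v = true then (if Even v.val then c else d) else 0))
          = c * (EB.card : ℝ) + d * (OB.card : ℝ) := by
        intro c d
        have hps : ∀ v : ZMod p, (if φ v = true then (if Even v.val then c else d) else 0)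
            = (if (Even v.val ∧ φ v = true) then c else 0)
              + (if (¬ Even v.val ∧ φ v = true) then d else 0) := by
          intro v
          by_cases h1 : φ v = true <;> by_cases h2 : Even v.val <;> simp [h1, h2]
        rw [Finset.sum_congr rfl (fun v _ => hps v), Finset.sum_add_distrib,
          ← Finset.sum_filter, ← Finset.sum_filter, Finset.sum_const, Finset.sum_const,
          nsmul_eq_mul, nsmul_eq_mul]
        rw [hEBdef, hEdef, Finset.filter_filter, hOBdef, hOdef, Finset.filter_filter]
        ring
      by_cases hk : Even k.val
      · have hpar : ∀ v : ZMod p, Even ((v - k).val) ↔ Even v.val := by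
          intro v
          have h := parity_add (v - k) k
          rw [sub_add_cancel] at h
          tauto
        rw [if_pos hk]
        simp only [hpar]
        rw [hsum2 y x]; ring
      · have hpar : ∀ v : ZMod p, Even ((v - k).val) ↔ ¬ Even v.val := by
          intro v
          have h := parity_add (v - k) k
          rw [sub_add_cancel] at h
          tauto
        rw [if_neg hk]
        simp only [hpar, ite_not]
        rw [hsum2 x y]
      
    rw [e1, e2, e3]
    ring

  -- basic equations
  have hEqB : ∀ k : ZMod p, φ k = true → a
      = (if Even k.val then x * (OB.card : ℝ) + y * (EB.card : ℝ)
          else x * (EB.card : ℝ) + y * (OB.card : ℝ))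
        + (z - y) + (if φ (k + N) = true then t - y else 0) := by
    intro k hk
    have h := (hlab k).1 hk
    rw [hS k, if_pos hk] at h
    exact h.symm
  have hEqW : ∀ k : ZMod p, φ k = false → b
      = (if Even k.val then x * (OB.card : ℝ) + y * (EB.card : ℝ)
          else x * (EB.card : ℝ) + y * (OB.card : ℝ))
        + (if φ (k + N) = true then t - y else 0) := by
    intro k hk
    have h := (hlab k).2 hk
    rw [hS k, if_neg (show ¬ (φ k = true) by simp [hk]), add_zero] at h
    exact h.symm
  -- agreement lemma
  have agree : ∀ k k' : ZMod p, (Even k.val ↔ Even k'.val) → φ k = φ k' →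
      φ (k + N) = φ (k' + N) := by
    intro k k' hpar hkk'
    have hbase : (if Even k.val then x * (OB.card : ℝ) + y * (EB.card : ℝ)
          else x * (EB.card : ℝ) + y * (OB.card : ℝ))
        = (if Even k'.val then x * (OB.card : ℝ) + y * (EB.card : ℝ)
          else x * (EB.card : ℝ) + y * (OB.card : ℝ)) := by
      by_cases h : Even k.val
      · rw [if_pos h, if_pos (hpar.mp h)]
      · rw [if_neg h, if_neg (fun hh => h (hpar.mpr hh))]
    have hd : (if φ (k + N) = true then t - y else 0)
        = (if φ (k' + N) = true then t - y else 0) := by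
      cases hk : φ k with
      | true =>
        have h1 := hEqB k hk
        have h2 := hEqB k' (by rw [← hkk', hk])
        rw [hbase] at h1
        linarith
      | false =>
        have h1 := hEqW k hk
        have h2 := hEqW k' (by rw [← hkk', hk])
        rw [hbase] at h1
        linarith
    by_cases h1 : φ (k + N) = true <;> by_cases h2 : φ (k' + N) = true
    · rw [h1, h2]
    · exfalso; rw [if_pos h1, if_neg h2] at hd; exact hyt (by linarith)
    · exfalso; rw [if_neg h1, if_pos h2] at hd; exact hyt (by linarith)
    · rw [Bool.not_eq_true] at h1 h2; rw [h1, h2]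
  -- dichotomy on each parity class
  have evdich : (∀ k : ZMod p, Even k.val → φ (k + N) = φ k)
      ∨ (∀ k : ZMod p, Even k.val → φ (k + N) ≠ φ k) := by
    by_cases h : ∀ k : ZMod p, Even k.val → φ (k + N) = φ k
    · exact Or.inl h
    · right
      push_neg at h
      obtain ⟨k0, hk0e, hk0⟩ := h
      intro k hk heq
      by_cases hc : φ k = φ k0
      · have h3 := agree k k0 (by tauto) hc
        rw [heq, hc] at h3
        exact hk0 h3.symm
      · have hc' : φ k = φ (k0 + N) := by
          have e1 : φ k = !(φ k0) := by revert hc; cases φ k <;> cases φ k0 <;> decide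
          have e2 : φ (k0 + N) = !(φ k0) := by revert hk0; cases φ (k0 + N) <;> cases φ k0 <;> decide
          rw [e1, e2]
        have h3 := agree k (k0 + N) (by rw [parN k0]; tauto) hc'
        rw [hNN k0, heq] at h3
        exact hc h3
  have oddich : (∀ k : ZMod p, ¬ Even k.val → φ (k + N) = φ k)
      ∨ (∀ k : ZMod p, ¬ Even k.val → φ (k + N) ≠ φ k) := by
    by_cases h : ∀ k : ZMod p, ¬ Even k.val → φ (k + N) = φ k
    · exact Or.inl h
    · right
      push_neg at h
      obtain ⟨k0, hk0e, hk0⟩ := h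
      intro k hk heq
      by_cases hc : φ k = φ k0
      · have h3 := agree k k0 (by tauto) hc
        rw [heq, hc] at h3
        exact hk0 h3.symm
      · have hc' : φ k = φ (k0 + N) := by
          have e1 : φ k = !(φ k0) := by revert hc; cases φ k <;> cases φ k0 <;> decide
          have e2 : φ (k0 + N) = !(φ k0) := by revert hk0; cases φ (k0 + N) <;> cases φ k0 <;> decide
          rw [e1, e2]
        have h3 := agree k (k0 + N) (by rw [parN k0]; tauto) hc'
        rw [hNN k0, heq] at h3
        exact hc h3

  -- counting lemmas
  have hOcard : O.card = p / 2 := by omega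
  have antiE : (∀ k : ZMod p, Even k.val → φ (k + N) ≠ φ k) → EB.card = q := by
    intro h
    have hbij : EB.card = EW.card := by
      refine Finset.card_nbij' (fun v => v + N) (fun v => v + N) ?_ ?_ ?_ ?_
      · intro v hv
        rw [Finset.mem_coe, memEB] at hv
        rw [Finset.mem_coe, memEW]
        refine ⟨(parN v).mpr hv.1, ?_⟩
        have hne := h v hv.1
        rw [hv.2] at hne
        revert hne; cases φ (v + N) <;> simp
      · intro v hv
        rw [Finset.mem_coe, memEW] at hv
        rw [Finset.mem_coe, memEB]
        refine ⟨(parN v).mpr hv.1, ?_⟩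
        have hne := h v hv.1
        rw [hv.2] at hne
        revert hne; cases φ (v + N) <;> simp
      · intro v _; exact hNN v
      · intro v _; exact hNN v
    omega
  have antiO : (∀ k : ZMod p, ¬ Even k.val → φ (k + N) ≠ φ k) → OB.card = q := by
    intro h
    have hbij : OB.card = OW.card := by
      refine Finset.card_nbij' (fun v => v + N) (fun v => v + N) ?_ ?_ ?_ ?_
      · intro v hv
        rw [Finset.mem_coe, memOB] at hv
        rw [Finset.mem_coe, memOW]
        refine ⟨by rw [parN]; exact hv.1, ?_⟩
        have hne := h v hv.1
        rw [hv.2] at hne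
        revert hne; cases φ (v + N) <;> simp
      · intro v hv
        rw [Finset.mem_coe, memOW] at hv
        rw [Finset.mem_coe, memOB]
        refine ⟨by rw [parN]; exact hv.1, ?_⟩
        have hne := h v hv.1
        rw [hv.2] at hne
        revert hne; cases φ (v + N) <;> simp
      · intro v _; exact hNN v
      · intro v _; exact hNN v
    omega
  have perE_even : (∀ k : ZMod p, Even k.val → φ (k + N) = φ k) → EB.card % 2 = 0 := by
    intro h
    have hsplitc := Finset.card_filter_add_card_filter_not
      (s := EB) (fun v => v.val < p / 2)
    have hkey : (EB.filter (fun v => v.val < p / 2)).card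
        = (EB.filter (fun v => ¬ v.val < p / 2)).card := by
      refine Finset.card_nbij' (fun v => v + N) (fun v => v + N) ?_ ?_ ?_ ?_
      · intro v hv
        rw [Finset.mem_coe, Finset.mem_filter, memEB] at hv
        obtain ⟨⟨hve, hvb⟩, hvlt⟩ := hv
        rw [Finset.mem_coe, Finset.mem_filter, memEB]
        have hval : (v + N).val = v.val + p / 2 := by
          rw [ZMod.val_add, hNval, Nat.mod_eq_of_lt (by omega)]
        refine ⟨⟨(parN v).mpr hve, by rw [h v hve, hvb]⟩,
          by change ¬ (v + N).val < p / 2; omega⟩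
      · intro v hv
        rw [Finset.mem_coe, Finset.mem_filter, memEB] at hv
        obtain ⟨⟨hve, hvb⟩, hvlt⟩ := hv
        rw [Finset.mem_coe, Finset.mem_filter, memEB]
        have hvlt2 : v.val < p := ZMod.val_lt v
        have hval : (v + N).val = v.val - p / 2 := by
          rw [ZMod.val_add, hNval, Nat.mod_eq_sub_mod (by omega),
            Nat.mod_eq_of_lt (by omega)]
          omega
        refine ⟨⟨(parN v).mpr hve, by rw [h v hve, hvb]⟩,
          by change ((v + N).val < p / 2); omega⟩
      · intro v _; exact hNN v
      · intro v _; exact hNN v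
    omega
  have hEB_all : (∀ v : ZMod p, Even v.val → φ v = true) → EB.card = p / 2 := by
    intro h
    have he : EB = E := by
      rw [hEBdef]
      apply Finset.filter_true_of_mem
      intro v hv
      rw [hEdef, Finset.mem_filter] at hv
      exact h v hv.2
    rw [he, hEcard]
  have hEB_none : (∀ v : ZMod p, Even v.val → φ v = false) → EB.card = 0 := by
    intro h
    rw [Finset.card_eq_zero, hEBdef, Finset.filter_eq_empty_iff]
    intro v hv
    rw [hEdef, Finset.mem_filter] at hv
    simp [h v hv.2]
  have hOB_all : (∀ v : ZMod p, ¬ Even v.val → φ v = true) → OB.card = p / 2 := by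
    intro h
    have ho : OB = O := by
      rw [hOBdef]
      apply Finset.filter_true_of_mem
      intro v hv
      rw [hOdef, Finset.mem_filter] at hv
      exact h v hv.2
    rw [ho, hOcard]
  have hOB_none : (∀ v : ZMod p, ¬ Even v.val → φ v = false) → OB.card = 0 := by
    intro h
    rw [Finset.card_eq_zero, hOBdef, Finset.filter_eq_empty_iff]
    intro v hv
    rw [hOdef, Finset.mem_filter] at hv
    simp [h v hv.2]

  -- arithmetic helpers
  have hn2 : p / 2 = 2 * q := by omega
  have hm4 : p / 4 = q := by omega
  have h34 : 3 * p / 4 = 3 * q := by omega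
  have hABeq : x * (OB.card : ℝ) + y * (EB.card : ℝ)
      = x * (EB.card : ℝ) + y * (OB.card : ℝ) → OB.card = EB.card := by
    intro h
    have hfac : ((OB.card : ℝ) - (EB.card : ℝ)) * (x - y) = 0 := by linarith [h]
    rcases mul_eq_zero.mp hfac with h1 | h1
    · exact_mod_cast sub_eq_zero.mp h1
    · exact absurd (sub_eq_zero.mp h1) hxy
  -- MAIN CASE ANALYSIS
  rcases evdich with hEper | hEanti
  · rcases oddich with hOper | hOanti
    · -- evens periodic, odds periodic
      by_cases hEmono : ∀ v : ZMod p, Even v.val → φ v = φ 0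
      · by_cases hOmono : ∀ v : ZMod p, ¬ Even v.val → φ v = φ 1
        · -- case (i): alternate
          have hne01 : φ 0 ≠ φ 1 := by
            intro heq
            obtain ⟨i, j, hij⟩ := hnontriv
            have hall : ∀ v : ZMod p, φ v = φ 0 := by
              intro v
              by_cases h : Even v.val
              · exact hEmono v h
              · rw [hOmono v h, heq]
            exact hij ((hall i).trans (hall j).symm)
          left
          refine ⟨?_, ?_⟩
          · intro i
            by_cases h : Even i.val
            · rw [hOmono (i + 1) (fun hh => (par1 i).mp hh h), hEmono i h]
              exact hne01.symm
            · rw [hEmono (i + 1) ((par1 i).mpr h), hOmono i h]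
              exact hne01
          cases hc : φ 0 with
          | true =>
            have hc1 : φ 1 = false := by
              revert hne01; rw [hc]; cases φ 1 <;> simp
            have hNe : EB.card = 2 * q := by
              rw [hEB_all (fun v hv => (hEmono v hv).trans hc)]; omega
            have hNo : OB.card = 0 := hOB_none (fun v hv => (hOmono v hv).trans hc1)
            have ha := hEqB 0 hc
            rw [if_pos h0even,
              if_pos (show φ (0 + N) = true by rw [zero_add, hEmono N hNeven, hc])] at ha
            have hb := hEqW 1 hc1
            rw [if_neg h1odd,
              if_neg (show ¬ φ (1 + N) = true by
                rw [hOmono (1 + N) (fun hh => h1odd ((parN 1).mp hh)), hc1]; simp)] at hb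
            rw [hNe, hNo] at ha hb
            constructor
            · rw [hn2]; push_cast at ha ⊢; linarith
            · rw [hn2]; push_cast at hb ⊢; linarith
          | false =>
            have hc1 : φ 1 = true := by
              revert hne01; rw [hc]; cases φ 1 <;> simp
            have hNe : EB.card = 0 := hEB_none (fun v hv => (hEmono v hv).trans hc)
            have hNo : OB.card = 2 * q := by
              rw [hOB_all (fun v hv => (hOmono v hv).trans hc1)]; omega
            have ha := hEqB 1 hc1
            rw [if_neg h1odd,
              if_pos (show φ (1 + N) = true by
                rw [hOmono (1 + N) (fun hh => h1odd ((parN 1).mp hh)), hc1])] at ha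
            have hb := hEqW 0 hc
            rw [if_pos h0even,
              if_neg (show ¬ φ (0 + N) = true by
                rw [zero_add, hEmono N hNeven, hc]; simp)] at hb
            rw [hNe, hNo] at ha hb
            constructor
            · rw [hn2]; push_cast at ha ⊢; linarith
            · rw [hn2]; push_cast at hb ⊢; linarith
        · -- evens mono, odds mixed : impossible
          exfalso
          push_neg at hOmono
          obtain ⟨vo, hvoo, hvone⟩ := hOmono
          obtain ⟨kob, hkobo, hkobb, kow, hkowo, hkoww⟩ :
              ∃ kob : ZMod p, ¬ Even kob.val ∧ φ kob = true ∧
                ∃ kow : ZMod p, ¬ Even kow.val ∧ φ kow = false := by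
            cases hc1 : φ 1 with
            | true => exact ⟨1, h1odd, hc1, vo, hvoo,
                by revert hvone; rw [hc1]; cases φ vo <;> simp⟩
            | false => exact ⟨vo, hvoo,
                by revert hvone; rw [hc1]; cases φ vo <;> simp, 1, h1odd, hc1⟩
          cases hc : φ 0 with
          | true =>
            have hNe : EB.card = p / 2 := hEB_all (fun v hv => (hEmono v hv).trans hc)
            have ha0 := hEqB 0 hc
            rw [if_pos h0even,
              if_pos (show φ (0 + N) = true by rw [zero_add, hEmono N hNeven, hc])] at ha0
            have haob := hEqB kob hkobb
            rw [if_neg hkobo,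
              if_pos (show φ (kob + N) = true by rw [hOper kob hkobo, hkobb])] at haob
            have hNeNo := hABeq (by linarith)
            have hOW0 : OW.card = 0 := by omega
            rw [Finset.card_eq_zero] at hOW0
            exact Finset.notMem_empty kow (hOW0 ▸ (memOW kow).mpr ⟨hkowo, hkoww⟩)
          | false =>
            have hNe : EB.card = 0 := hEB_none (fun v hv => (hEmono v hv).trans hc)
            have hb0 := hEqW 0 hc
            rw [if_pos h0even,
              if_neg (show ¬ φ (0 + N) = true by
                rw [zero_add, hEmono N hNeven, hc]; simp)] at hb0
            have hbow := hEqW kow hkoww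
            rw [if_neg hkowo,
              if_neg (show ¬ φ (kow + N) = true by
                rw [hOper kow hkowo, hkoww]; simp)] at hbow
            have hNeNo := hABeq (by linarith)
            have hOB0 : OB.card = 0 := by omega
            rw [Finset.card_eq_zero] at hOB0
            exact Finset.notMem_empty kob (hOB0 ▸ (memOB kob).mpr ⟨hkobo, hkobb⟩)
      · push_neg at hEmono
        obtain ⟨ve, hvee, hvene⟩ := hEmono
        obtain ⟨keb, hkebe, hkebb, kew, hkewe, hkeww⟩ :
            ∃ keb : ZMod p, Even keb.val ∧ φ keb = true ∧
              ∃ kew : ZMod p, Even kew.val ∧ φ kew = false := by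
          cases hc0 : φ 0 with
          | true => exact ⟨0, h0even, hc0, ve, hvee,
              by revert hvene; rw [hc0]; cases φ ve <;> simp⟩
          | false => exact ⟨ve, hvee,
              by revert hvene; rw [hc0]; cases φ ve <;> simp, 0, h0even, hc0⟩
        by_cases hOmono : ∀ v : ZMod p, ¬ Even v.val → φ v = φ 1
        · -- odds mono, evens mixed : impossible
          exfalso
          cases hc1 : φ 1 with
          | true =>
            have hNo : OB.card = p / 2 := hOB_all (fun v hv => (hOmono v hv).trans hc1)
            have ha1 := hEqB 1 hc1
            rw [if_neg h1odd,
              if_pos (show φ (1 + N) = true by rw [hOper 1 h1odd, hc1])] at ha1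
            have haeb := hEqB keb hkebb
            rw [if_pos hkebe,
              if_pos (show φ (keb + N) = true by rw [hEper keb hkebe, hkebb])] at haeb
            have hNeNo := hABeq (by linarith)
            have hEW0 : EW.card = 0 := by omega
            rw [Finset.card_eq_zero] at hEW0
            exact Finset.notMem_empty kew (hEW0 ▸ (memEW kew).mpr ⟨hkewe, hkeww⟩)
          | false =>
            have hNo : OB.card = 0 := hOB_none (fun v hv => (hOmono v hv).trans hc1)
            have hb1 := hEqW 1 hc1
            rw [if_neg h1odd,
              if_neg (show ¬ φ (1 + N) = true by rw [hOper 1 h1odd, hc1]; simp)] at hb1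
            have hbew := hEqW kew hkeww
            rw [if_pos hkewe,
              if_neg (show ¬ φ (kew + N) = true by rw [hEper kew hkewe, hkeww]; simp)] at hbew
            have hNeNo := hABeq (by linarith)
            have hEB0 : EB.card = 0 := by omega
            rw [Finset.card_eq_zero] at hEB0
            exact Finset.notMem_empty keb (hEB0 ▸ (memEB keb).mpr ⟨hkebe, hkebb⟩)
        · -- case (ii): both classes mixed, p/2-periodic
          push_neg at hOmono
          obtain ⟨vo, hvoo, hvone⟩ := hOmono
          obtain ⟨kob, hkobo, hkobb, kow, hkowo, hkoww⟩ :
              ∃ kob : ZMod p, ¬ Even kob.val ∧ φ kob = true ∧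
                ∃ kow : ZMod p, ¬ Even kow.val ∧ φ kow = false := by
            cases hc1 : φ 1 with
            | true => exact ⟨1, h1odd, hc1, vo, hvoo,
                by revert hvone; rw [hc1]; cases φ vo <;> simp⟩
            | false => exact ⟨vo, hvoo,
                by revert hvone; rw [hc1]; cases φ vo <;> simp, 1, h1odd, hc1⟩
          have haeb := hEqB keb hkebb
          rw [if_pos hkebe,
            if_pos (show φ (keb + N) = true by rw [hEper keb hkebe, hkebb])] at haeb
          have haob := hEqB kob hkobb
          rw [if_neg hkobo,
            if_pos (show φ (kob + N) = true by rw [hOper kob hkobo, hkobb])] at haob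
          have hbew := hEqW kew hkeww
          rw [if_pos hkewe,
            if_neg (show ¬ φ (kew + N) = true by rw [hEper kew hkewe, hkeww]; simp)] at hbew
          have hNeNo := hABeq (by linarith)
          have hNe_even := perE_even hEper
          have hNe_pos : 1 ≤ EB.card :=
            Finset.card_pos.mpr ⟨keb, (memEB keb).mpr ⟨hkebe, hkebb⟩⟩
          have h2a : (2 * ((EB.card / 2 - 1 : ℕ) : ℝ) + 2) = (EB.card : ℝ) := by
            have hh : 2 * (EB.card / 2 - 1) + 2 = EB.card := by omega
            exact_mod_cast hh
          right; left
          refine ⟨?_, EB.card / 2 - 1, by omega, ?_, ?_⟩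
          · intro i
            by_cases h : Even i.val
            · exact hEper i h
            · exact hOper i h
          · rw [h2a, show 2 * ((EB.card / 2 - 1 : ℕ) : ℝ) = (EB.card : ℝ) - 2 by linarith]
            rw [hNeNo] at haeb
            linarith
          · rw [h2a]
            rw [hNeNo] at hbew
            linarith
    · -- case (iv)A : evens periodic, odds antiperiodic
      have hNo : OB.card = q := antiO hOanti
      have hpairO := hOanti 1 h1odd
      obtain ⟨kob, hkobo, hkobb, kow, hkowo, hkoww⟩ :
          ∃ kob : ZMod p, ¬ Even kob.val ∧ φ kob = true ∧
            ∃ kow : ZMod p, ¬ Even kow.val ∧ φ kow = false := by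
        cases hc1 : φ 1 with
        | true => exact ⟨1, h1odd, hc1, 1 + N, fun hh => h1odd ((parN 1).mp hh),
            by revert hpairO; rw [hc1]; cases φ (1 + N) <;> simp⟩
        | false => exact ⟨1 + N, fun hh => h1odd ((parN 1).mp hh),
            by revert hpairO; rw [hc1]; cases φ (1 + N) <;> simp, 1, h1odd, hc1⟩
      have haob := hEqB kob hkobb
      rw [if_neg hkobo,
        if_neg (show ¬ φ (kob + N) = true from
          fun hh => hOanti kob hkobo (by rw [hh, hkobb]))] at haob
      have hbow := hEqW kow hkoww
      rw [if_neg hkowo,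
        if_pos (show φ (kow + N) = true by
          have hh := hOanti kow hkowo
          revert hh; rw [hkoww]; cases φ (kow + N) <;> simp)] at hbow
      have hEmono : ∀ v : ZMod p, Even v.val → φ v = φ 0 := by
        by_contra hmix
        push_neg at hmix
        obtain ⟨ve, hvee, hvene⟩ := hmix
        obtain ⟨keb, hkebe, hkebb, kew, hkewe, hkeww⟩ :
            ∃ keb : ZMod p, Even keb.val ∧ φ keb = true ∧
              ∃ kew : ZMod p, Even kew.val ∧ φ kew = false := by
          cases hc0 : φ 0 with
          | true => exact ⟨0, h0even, hc0, ve, hvee,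
              by revert hvene; rw [hc0]; cases φ ve <;> simp⟩
          | false => exact ⟨ve, hvee,
              by revert hvene; rw [hc0]; cases φ ve <;> simp, 0, h0even, hc0⟩
        have haeb := hEqB keb hkebb
        rw [if_pos hkebe,
          if_pos (show φ (keb + N) = true by rw [hEper keb hkebe, hkebb])] at haeb
        have hbew := hEqW kew hkeww
        rw [if_pos hkewe,
          if_neg (show ¬ φ (kew + N) = true by rw [hEper kew hkewe, hkeww]; simp)] at hbew
        exact hyt (by linarith)
      right; right; right
      cases hc : φ 0 with
      | true =>
        have hNe : EB.card = 2 * q := by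
          rw [hEB_all (fun v hv => (hEmono v hv).trans hc)]; omega
        have ha := hEqB 0 hc
        rw [if_pos h0even,
          if_pos (show φ (0 + N) = true by rw [zero_add, hEmono N hNeven, hc])] at ha
        rw [hNe, hNo] at ha haob hbow
        push_cast at ha haob hbow
        have hteq : t = (q : ℝ) * x + (1 - (q : ℝ)) * y := by linarith
        refine ⟨by rw [hm4]; linarith, ⟨φ, 0, ?_, ?_, Or.inl (fun i => by rw [add_zero])⟩,
          Or.inl ⟨by rw [hn2, hm4]; push_cast; linarith, by rw [h34]; push_cast; linarith⟩⟩
        · intro i hilt hie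
          have h1 : Even ((i : ZMod p)).val := by
            rw [ZMod.val_natCast_of_lt (by omega)]; exact hie
          exact ⟨(hEmono _ h1).trans hc, (hEmono _ ((parN _).mpr h1)).trans hc⟩
        · intro i hilt hio
          have h1 : ¬ Even ((i : ZMod p)).val := by
            rw [ZMod.val_natCast_of_lt (by omega)]
            exact Nat.not_even_iff_odd.mpr hio
          exact (hOanti _ h1).symm
      | false =>
        have hNe : EB.card = 0 := hEB_none (fun v hv => (hEmono v hv).trans hc)
        have hb0 := hEqW 0 hc
        rw [if_pos h0even,
          if_neg (show ¬ φ (0 + N) = true by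
            rw [zero_add, hEmono N hNeven, hc]; simp)] at hb0
        rw [hNe, hNo] at hb0 haob hbow
        push_cast at hb0 haob hbow
        have hteq : t = (q : ℝ) * x + (1 - (q : ℝ)) * y := by linarith
        refine ⟨by rw [hm4]; linarith,
          ⟨fun j => !φ j, 0, ?_, ?_, Or.inr (fun i => by rw [add_zero])⟩,
          Or.inr ⟨by rw [hm4]; push_cast; linarith, by rw [hm4]; push_cast; linarith⟩⟩
        · intro i hilt hie
          have h1 : Even ((i : ZMod p)).val := by
            rw [ZMod.val_natCast_of_lt (by omega)]; exact hie
          constructor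
          · show (!φ ((i : ZMod p))) = true
            rw [(hEmono _ h1).trans hc]; rfl
          · show (!φ ((i : ZMod p) + N)) = true
            rw [(hEmono _ ((parN _).mpr h1)).trans hc]; rfl
        · intro i hilt hio
          have h1 : ¬ Even ((i : ZMod p)).val := by
            rw [ZMod.val_natCast_of_lt (by omega)]
            exact Nat.not_even_iff_odd.mpr hio
          show (!φ ((i : ZMod p))) ≠ (!φ ((i : ZMod p) + N))
          intro hh
          exact (hOanti _ h1) (Bool.not_inj hh).symm
  · rcases oddich with hOper | hOanti
    · -- case (iv)B : evens antiperiodic, odds periodic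
      have hNe : EB.card = q := antiE hEanti
      have hpairE := hEanti 0 h0even
      rw [zero_add] at hpairE
      obtain ⟨keb, hkebe, hkebb, kew, hkewe, hkeww⟩ :
          ∃ keb : ZMod p, Even keb.val ∧ φ keb = true ∧
            ∃ kew : ZMod p, Even kew.val ∧ φ kew = false := by
        cases hc0 : φ 0 with
        | true => exact ⟨0, h0even, hc0, N, hNeven,
            by revert hpairE; rw [hc0]; cases φ N <;> simp⟩
        | false => exact ⟨N, hNeven,
            by revert hpairE; rw [hc0]; cases φ N <;> simp, 0, h0even, hc0⟩
      have haeb := hEqB keb hkebb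
      rw [if_pos hkebe,
        if_neg (show ¬ φ (keb + N) = true from
          fun hh => hEanti keb hkebe (by rw [hh, hkebb]))] at haeb
      have hbew := hEqW kew hkeww
      rw [if_pos hkewe,
        if_pos (show φ (kew + N) = true by
          have hh := hEanti kew hkewe
          revert hh; rw [hkeww]; cases φ (kew + N) <;> simp)] at hbew
      have hOmono : ∀ v : ZMod p, ¬ Even v.val → φ v = φ 1 := by
        by_contra hmix
        push_neg at hmix
        obtain ⟨vo, hvoo, hvone⟩ := hmix
        obtain ⟨kob, hkobo, hkobb, kow, hkowo, hkoww⟩ :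
            ∃ kob : ZMod p, ¬ Even kob.val ∧ φ kob = true ∧
              ∃ kow : ZMod p, ¬ Even kow.val ∧ φ kow = false := by
          cases hc1 : φ 1 with
          | true => exact ⟨1, h1odd, hc1, vo, hvoo,
              by revert hvone; rw [hc1]; cases φ vo <;> simp⟩
          | false => exact ⟨vo, hvoo,
              by revert hvone; rw [hc1]; cases φ vo <;> simp, 1, h1odd, hc1⟩
        have haob := hEqB kob hkobb
        rw [if_neg hkobo,
          if_pos (show φ (kob + N) = true by rw [hOper kob hkobo, hkobb])] at haob
        have hbow := hEqW kow hkoww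
        rw [if_neg hkowo,
          if_neg (show ¬ φ (kow + N) = true by rw [hOper kow hkowo, hkoww]; simp)] at hbow
        exact hyt (by linarith)
      have hoddsub : ∀ v : ZMod p, Even v.val → ¬ Even ((v - 1).val) := by
        intro v hv hh
        have h := par1 (v - 1)
        rw [sub_add_cancel] at h
        exact (h.mp hv) hh
      have hevensub : ∀ v : ZMod p, ¬ Even v.val → Even ((v - 1).val) := by
        intro v hv
        by_contra hh
        have h := par1 (v - 1)
        rw [sub_add_cancel] at h
        exact hv (h.mpr hh)
      right; right; right
      cases hc1 : φ 1 with
      | true =>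
        have hNo : OB.card = 2 * q := by
          rw [hOB_all (fun v hv => (hOmono v hv).trans hc1)]; omega
        have ha1 := hEqB 1 hc1
        rw [if_neg h1odd,
          if_pos (show φ (1 + N) = true by rw [hOper 1 h1odd, hc1])] at ha1
        rw [hNe, hNo] at ha1 haeb hbew
        push_cast at ha1 haeb hbew
        have hteq : t = (q : ℝ) * x + (1 - (q : ℝ)) * y := by linarith
        refine ⟨by rw [hm4]; linarith,
          ⟨fun j => φ (j - 1), 1, ?_, ?_,
            Or.inl (fun i => by show φ i = φ (i + 1 - 1); rw [add_sub_cancel_right])⟩,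
          Or.inl ⟨by rw [hn2, hm4]; push_cast; linarith, by rw [h34]; push_cast; linarith⟩⟩
        · intro i hilt hie
          have h1 : Even ((i : ZMod p)).val := by
            rw [ZMod.val_natCast_of_lt (by omega)]; exact hie
          constructor
          · show φ ((i : ZMod p) - 1) = true
            exact (hOmono _ (hoddsub _ h1)).trans hc1
          · show φ ((i : ZMod p) + N - 1) = true
            exact (hOmono _ (hoddsub _ ((parN _).mpr h1))).trans hc1
        · intro i hilt hio
          have h1 : ¬ Even ((i : ZMod p)).val := by
            rw [ZMod.val_natCast_of_lt (by omega)]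
            exact Nat.not_even_iff_odd.mpr hio
          show φ ((i : ZMod p) - 1) ≠ φ ((i : ZMod p) + N - 1)
          have hrw : (i : ZMod p) + N - 1 = ((i : ZMod p) - 1) + N := by ring
          rw [hrw]
          exact (hEanti _ (hevensub _ h1)).symm
      | false =>
        have hNo : OB.card = 0 := hOB_none (fun v hv => (hOmono v hv).trans hc1)
        have hb1 := hEqW 1 hc1
        rw [if_neg h1odd,
          if_neg (show ¬ φ (1 + N) = true by rw [hOper 1 h1odd, hc1]; simp)] at hb1
        rw [hNe, hNo] at hb1 haeb hbew
        push_cast at hb1 haeb hbew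
        have hteq : t = (q : ℝ) * x + (1 - (q : ℝ)) * y := by linarith
        refine ⟨by rw [hm4]; linarith,
          ⟨fun j => !φ (j - 1), 1, ?_, ?_,
            Or.inr (fun i => by show (!φ i) = !φ (i + 1 - 1); rw [add_sub_cancel_right])⟩,
          Or.inr ⟨by rw [hm4]; push_cast; linarith, by rw [hm4]; push_cast; linarith⟩⟩
        · intro i hilt hie
          have h1 : Even ((i : ZMod p)).val := by
            rw [ZMod.val_natCast_of_lt (by omega)]; exact hie
          constructor
          · show (!φ ((i : ZMod p) - 1)) = true
            rw [(hOmono _ (hoddsub _ h1)).trans hc1]; rfl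
          · show (!φ ((i : ZMod p) + N - 1)) = true
            rw [(hOmono _ (hoddsub _ ((parN _).mpr h1))).trans hc1]; rfl
        · intro i hilt hio
          have h1 : ¬ Even ((i : ZMod p)).val := by
            rw [ZMod.val_natCast_of_lt (by omega)]
            exact Nat.not_even_iff_odd.mpr hio
          show (!φ ((i : ZMod p) - 1)) ≠ (!φ ((i : ZMod p) + N - 1))
          have hrw : (i : ZMod p) + N - 1 = ((i : ZMod p) - 1) + N := by ring
          rw [hrw]
          intro hh
          exact (hEanti _ (hevensub _ h1)) (Bool.not_inj hh).symm
    · -- case (iii) : antiperiodic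
      have hNe : EB.card = q := antiE hEanti
      have hNo : OB.card = q := antiO hOanti
      have hpairE := hEanti 0 h0even
      rw [zero_add] at hpairE
      obtain ⟨keb, hkebe, hkebb, kew, hkewe, hkeww⟩ :
          ∃ keb : ZMod p, Even keb.val ∧ φ keb = true ∧
            ∃ kew : ZMod p, Even kew.val ∧ φ kew = false := by
        cases hc0 : φ 0 with
        | true => exact ⟨0, h0even, hc0, N, hNeven,
            by revert hpairE; rw [hc0]; cases φ N <;> simp⟩
        | false => exact ⟨N, hNeven,
            by revert hpairE; rw [hc0]; cases φ N <;> simp, 0, h0even, hc0⟩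
      have haeb := hEqB keb hkebb
      rw [if_pos hkebe,
        if_neg (show ¬ φ (keb + N) = true from
          fun hh => hEanti keb hkebe (by rw [hh, hkebb]))] at haeb
      have hbew := hEqW kew hkeww
      rw [if_pos hkewe,
        if_pos (show φ (kew + N) = true by
          have hh := hEanti kew hkewe
          revert hh; rw [hkeww]; cases φ (kew + N) <;> simp)] at hbew
      rw [hNe, hNo] at haeb hbew
      right; right; left
      refine ⟨?_, ?_, ?_⟩
      · intro i
        by_cases h : Even i.val
        · exact hEanti i h
        · exact hOanti i h
      · rw [hm4]; push_cast at haeb ⊢; linarith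
      · rw [hm4]; push_cast at hbew ⊢; linarith
end

section
/- Every alternate (1-antiperiodic) coloring φ of a Type 2 cycle is a constant 2-labelling: if p ≡ 0 (mod 4) then with constants a = (p/2−2)x + t + z and b = (p/2)x, and if p ≡ 2 (mod 4) then with constants a = (p/2−1)x + z and b = (p/2−1)x + t. -/
open Finset

private lemma sum_range_two_mul_aux (f : ℕ → ℝ) (n : ℕ) :
    ∑ i ∈ Finset.range (2 * n), f i
      = ∑ j ∈ Finset.range n, (f (2 * j) + f (2 * j + 1)) := by
  induction n with
  | zero => simp
  | succ n ih =>
    rw [Nat.mul_succ, Finset.sum_range_succ, Finset.sum_range_succ,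
      Finset.sum_range_succ, ← ih]
    ring

/-- Every alternate coloring of a Type 2 cycle is a constant 2-labelling:
with `a = (p/2-2)x + t + z`, `b = (p/2)x` when `p ≡ 0 (mod 4)`, and with
`a = (p/2-1)x + z`, `b = (p/2-1)x + t` when `p ≡ 2 (mod 4)`. -/
theorem type2_alternate_constant2Labelling
    (p : ℕ) [NeZero p] (hp : 4 ≤ p) (hpe : Even p)
    (w : ZMod p → ℝ) (z x t : ℝ) (hxt : x ≠ t)
    (hw0 : w 0 = z) (hwt : w ((p / 2 : ℕ) : ZMod p) = t)
    (hw : ∀ i : ZMod p, i ≠ 0 → i ≠ ((p / 2 : ℕ) : ZMod p) → w i = x)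
    (φ : ZMod p → Bool) (halt : ∀ i : ZMod p, φ (i + 1) ≠ φ i) :
    (p % 4 = 0 → ∀ k : ZMod p,
      (φ k = true → (∑ u : ZMod p, if φ (u + k) = true then w u else 0) =
        (((p / 2 : ℕ) : ℝ) - 2) * x + t + z) ∧
      (φ k = false → (∑ u : ZMod p, if φ (u + k) = true then w u else 0) =
        ((p / 2 : ℕ) : ℝ) * x)) ∧
    (p % 4 = 2 → ∀ k : ZMod p,
      (φ k = true → (∑ u : ZMod p, if φ (u + k) = true then w u else 0) =
        (((p / 2 : ℕ) : ℝ) - 1) * x + z) ∧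
      (φ k = false → (∑ u : ZMod p, if φ (u + k) = true then w u else 0) =
        (((p / 2 : ℕ) : ℝ) - 1) * x + t)) := by
  have hp2 : p % 2 = 0 := Nat.even_iff.mp hpe
  set q : ℕ := p / 2 with hq
  have hpd : 2 * q = p := by omega
  have hq2 : 2 ≤ q := by omega
  have hqlt : q < p := by omega
  -- alternation lemma
  have hA : ∀ (n : ℕ) (v : ZMod p),
      φ ((n : ZMod p) + v) = if Even n then φ v else !φ v := by
    intro n
    induction n with
    | zero => intro v; simp
    | succ n ih =>
      intro v
      have h1 : ((n + 1 : ℕ) : ZMod p) + v = ((n : ZMod p) + v) + 1 := by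
        push_cast; ring
      have h2 : φ (((n : ZMod p) + v) + 1) = !φ ((n : ZMod p) + v) := by
        have := halt ((n : ZMod p) + v)
        revert this
        cases φ (((n : ZMod p) + v) + 1) <;> cases φ ((n : ZMod p) + v) <;> simp
      rw [h1, h2, ih v]
      by_cases he : Even n <;> simp [Nat.even_add_one, he]
  -- transport sums to range p
  have hsum : ∀ f : ZMod p → ℝ,
      ∑ u : ZMod p, f u = ∑ i ∈ Finset.range p, f (i : ZMod p) := by
    intro f
    refine (Finset.sum_nbij' (i := fun i : ℕ => (i : ZMod p))
      (j := fun u : ZMod p => u.val) ?_ ?_ ?_ ?_ ?_).symm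
    · intro a _; exact Finset.mem_univ _
    · intro u _; exact Finset.mem_range.mpr (ZMod.val_lt u)
    · intro a ha; exact ZMod.val_cast_of_lt (Finset.mem_range.mp ha)
    · intro u _; exact ZMod.natCast_rightInverse u
    · intro a _; rfl
  -- injectivity of cast below p
  have hinj : ∀ m : ℕ, m < p → ∀ n : ℕ, n < p →
      (m : ZMod p) = (n : ZMod p) → m = n := by
    intro m hm n hn h
    have := congrArg ZMod.val h
    rwa [ZMod.val_cast_of_lt hm, ZMod.val_cast_of_lt hn] at this
  -- value of w
  have hwm : ∀ m : ℕ, m < p →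
      w (m : ZMod p) = x + (if m = 0 then z - x else 0)
        + (if m = q then t - x else 0) := by
    intro m hm
    rcases eq_or_ne m 0 with rfl | h0
    · have : (0 : ℕ) ≠ q := by omega
      simp [hw0, this]
    · rcases eq_or_ne m q with rfl | hq'
      · rw [hwt, if_neg (by omega), if_pos rfl]
        ring
      · rw [hw]
        · simp [h0, hq']
        · intro h
          exact h0 (hinj m hm 0 (by omega) (by simpa using h))
        · intro h
          exact hq' (hinj m hm q hqlt h)
  -- the two key sums
  have key : ∀ k : ZMod p,
      (∑ u : ZMod p, if φ (u + k) = true then w u else 0)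
        = if φ k then ∑ j ∈ Finset.range q, w ((2 * j : ℕ) : ZMod p)
          else ∑ j ∈ Finset.range q, w ((2 * j + 1 : ℕ) : ZMod p) := by
    intro k
    rw [hsum, show Finset.range p = Finset.range (2 * q) by rw [hpd],
      sum_range_two_mul_aux]
    cases hk : φ k with
    | true =>
      simp only [if_pos rfl]
      apply Finset.sum_congr rfl
      intro j _
      rw [show ((2 * j : ℕ) : ZMod p) + k = ((2 * j : ℕ) : ZMod p) + k from rfl,
        hA (2 * j) k, hA (2 * j + 1) k]
      simp [Nat.even_add_one, hk]
    | false =>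
      rw [if_neg (fun h => by simp [hk] at h)]
      apply Finset.sum_congr rfl
      intro j _
      rw [hA (2 * j) k, hA (2 * j + 1) k]
      simp [Nat.even_add_one, hk]
  -- even-index sum
  have hEsplit : ∑ j ∈ Finset.range q, w ((2 * j : ℕ) : ZMod p)
      = (q : ℝ) * x + (z - x)
        + ∑ j ∈ Finset.range q, (if 2 * j = q then t - x else 0) := by
    have h1 : ∀ j ∈ Finset.range q,
        w ((2 * j : ℕ) : ZMod p)
          = x + (if 2 * j = 0 then z - x else 0) + (if 2 * j = q then t - x else 0) := by
      intro j hj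
      exact hwm (2 * j) (by have := Finset.mem_range.mp hj; omega)
    rw [Finset.sum_congr rfl h1, Finset.sum_add_distrib, Finset.sum_add_distrib]
    have h2 : ∑ j ∈ Finset.range q, (if 2 * j = 0 then z - x else 0) = z - x := by
      rw [Finset.sum_eq_single 0]
      · simp
      · intro b _ hb; simp [hb]
      · intro h; exact absurd (Finset.mem_range.mpr (by omega)) h
    rw [h2]
    simp [mul_comm]
  -- odd-index sum
  have hOsplit : ∑ j ∈ Finset.range q, w ((2 * j + 1 : ℕ) : ZMod p)
      = (q : ℝ) * x
        + ∑ j ∈ Finset.range q, (if 2 * j + 1 = q then t - x else 0) := by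
    have h1 : ∀ j ∈ Finset.range q,
        w ((2 * j + 1 : ℕ) : ZMod p)
          = x + (if 2 * j + 1 = 0 then z - x else 0)
            + (if 2 * j + 1 = q then t - x else 0) := by
      intro j hj
      exact hwm (2 * j + 1) (by have := Finset.mem_range.mp hj; omega)
    rw [Finset.sum_congr rfl h1, Finset.sum_add_distrib, Finset.sum_add_distrib]
    simp [mul_comm]
  constructor
  · -- p % 4 = 0
    intro h4 k
    have hqeven : q % 2 = 0 := by omega
    have hT : ∑ j ∈ Finset.range q, (if 2 * j = q then t - x else 0) = t - x := by
      rw [Finset.sum_eq_single (q / 2)]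
      · simp [show 2 * (q / 2) = q by omega]
      · intro b _ hb; rw [if_neg (by omega)]
      · intro h; exact absurd (Finset.mem_range.mpr (by omega)) h
    have hT' : ∑ j ∈ Finset.range q, (if 2 * j + 1 = q then t - x else 0) = 0 := by
      apply Finset.sum_eq_zero
      intro j _; rw [if_neg (by omega)]
    constructor
    · intro hk
      rw [key k, if_pos hk, hEsplit, hT]
      ring
    · intro hk
      rw [key k, if_neg (by simp [hk]), hOsplit, hT']
      ring
  · -- p % 4 = 2
    intro h4 k
    have hqodd : q % 2 = 1 := by omega
    have hT : ∑ j ∈ Finset.range q, (if 2 * j = q then t - x else 0) = 0 := by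
      apply Finset.sum_eq_zero
      intro j _; rw [if_neg (by omega)]
    have hT' : ∑ j ∈ Finset.range q, (if 2 * j + 1 = q then t - x else 0) = t - x := by
      rw [Finset.sum_eq_single ((q - 1) / 2)]
      · rw [if_pos (by omega)]
      · intro b _ hb; rw [if_neg (by omega)]
      · intro h; exact absurd (Finset.mem_range.mpr (by omega)) h
    constructor
    · intro hk
      rw [key k, if_pos hk, hEsplit, hT]
      ring
    · intro hk
      rw [key k, if_neg (by simp [hk]), hOsplit, hT']
      ring
end

section
/- Every alternate (1-antiperiodic) coloring φ of a Type 4 cycle is a constant 2-labelling with constants a = (p/2−1)y + z and b = (p/2)x. -/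
lemma sum_zmod_range (p : ℕ) [NeZero p] (f : ZMod p → ℝ) :
    ∑ u : ZMod p, f u = ∑ n ∈ Finset.range p, f n := by
  refine Finset.sum_nbij' (fun u => u.val) (fun n => (n : ZMod p)) ?_ ?_ ?_ ?_ ?_
  · intro u _; simpa [Finset.mem_range] using ZMod.val_lt u
  · intro n _; simp
  · intro u _; exact ZMod.natCast_rightInverse u
  · intro n hn; exact ZMod.val_cast_of_lt (Finset.mem_range.mp hn)
  · intro u _; rw [ZMod.natCast_rightInverse u]

lemma sum_even_part (q : ℕ) (hq : 1 ≤ q) (z y : ℝ) :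
    ∑ n ∈ Finset.range (2 * q), (if Even n then (if n = 0 then z else y) else 0)
      = ((q : ℝ) - 1) * y + z := by
  induction q with
  | zero => omega
  | succ q ih =>
    rcases Nat.eq_or_lt_of_le hq with h | h
    · simp [← h]
      norm_num [Finset.sum_range_succ]
    · have hq1 : 1 ≤ q := by omega
      have h2 : 2 * (q + 1) = (2 * q) + 1 + 1 := by ring
      rw [h2, Finset.sum_range_succ, Finset.sum_range_succ, ih hq1]
      have h2q : Even (2 * q) := even_two_mul q
      have hodd : ¬ Even (2 * q + 1) := by simp [Nat.even_add_one, h2q]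
      rw [if_neg hodd, if_pos h2q, if_neg (by omega : ¬ (2 * q = 0))]
      push_cast; ring

lemma sum_odd_part (q : ℕ) (x : ℝ) :
    ∑ n ∈ Finset.range (2 * q), (if ¬ Even n then x else 0) = (q : ℝ) * x := by
  induction q with
  | zero => simp
  | succ q ih =>
    have h2 : 2 * (q + 1) = (2 * q) + 1 + 1 := by ring
    rw [h2, Finset.sum_range_succ, Finset.sum_range_succ, ih]
    have h2q : Even (2 * q) := even_two_mul q
    have h1 : ¬ Even (2 * q + 1) := by simp [Nat.even_add_one, h2q]
    rw [if_pos h1, if_neg (by simpa using h2q)]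
    push_cast; ring

/-- Every alternate coloring of a Type 4 cycle (`z (xy)^((p-2)/2) x`) is a
constant 2-labelling with constants `a = (p/2-1)y + z` and `b = (p/2)x`. -/
theorem type4_alternate_constant2Labelling
    (p : ℕ) [NeZero p] (hp : 4 ≤ p) (hpe : Even p)
    (w : ZMod p → ℝ) (z x y : ℝ) (hxy : x ≠ y)
    (hw0 : w 0 = z)
    (hwx : ∀ i : ZMod p, Odd i.val → w i = x)
    (hwy : ∀ i : ZMod p, i ≠ 0 → Even i.val → w i = y)
    (φ : ZMod p → Bool) (halt : ∀ i : ZMod p, φ (i + 1) ≠ φ i) :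
    ∀ k : ZMod p,
      (φ k = true → (∑ u : ZMod p, if φ (u + k) = true then w u else 0) =
        (((p / 2 : ℕ) : ℝ) - 1) * y + z) ∧
      (φ k = false → (∑ u : ZMod p, if φ (u + k) = true then w u else 0) =
        ((p / 2 : ℕ) : ℝ) * x) := by
  obtain ⟨q, hq⟩ := hpe
  have hpq : p = 2 * q := by omega
  have hq1 : 1 ≤ q := by omega
  have hpdiv : p / 2 = q := by omega
  -- parity description of φ
  have hnat : ∀ n : ℕ, φ (n : ZMod p) = if Even n then φ 0 else !(φ 0) := by
    intro n
    induction n with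
    | zero => simp
    | succ n ih =>
      have h := halt (n : ZMod p)
      have h' : φ ((n : ZMod p) + 1) = !(φ (n : ZMod p)) := by
        rcases Bool.eq_false_or_eq_true (φ ((n : ZMod p) + 1)) with h1 | h1 <;>
          rcases Bool.eq_false_or_eq_true (φ (n : ZMod p)) with h2 | h2 <;> simp_all
      push_cast
      rw [h', ih]
      by_cases he : Even n
      · rw [if_pos he, if_neg (by simp [Nat.even_add_one, he])]
      · rw [if_neg he, if_pos (by simp [Nat.even_add_one, he]), Bool.not_not]
  have hval : ∀ v : ZMod p, φ v = if Even v.val then φ 0 else !(φ 0) := by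
    intro v
    conv_lhs => rw [← ZMod.natCast_rightInverse v]
    exact hnat v.val
  have hparity : ∀ u k : ZMod p, (φ (u + k) = φ k ↔ Even u.val) := by
    intro u k
    have hadd : Even (u + k).val ↔ (Even u.val ↔ Even k.val) := by
      rw [ZMod.val_add]
      have hmm : (u.val + k.val) % p % 2 = (u.val + k.val) % 2 :=
        Nat.mod_mod_of_dvd _ ⟨q, hpq⟩
      rw [Nat.even_iff, hmm, ← Nat.even_iff, Nat.even_add]
    rw [hval (u + k), hval k]
    by_cases h1 : Even u.val <;> by_cases h2 : Even k.val
    · rw [if_pos (hadd.mpr (by tauto)), if_pos h2]; simp [h1]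
    · rw [if_neg (fun h => h2 ((hadd.mp h).mp h1)), if_neg h2]; simp [h1]
    · rw [if_neg (fun h => h1 ((hadd.mp h).mpr h2)), if_pos h2]; simp [h1]
    · rw [if_pos (hadd.mpr (by tauto)), if_neg h2]; simp [h1]
  -- weight values on range p
  have hwn : ∀ n ∈ Finset.range p, w n =
      (if Even n then (if n = 0 then z else y) else x) := by
    intro n hn
    have hlt : n < p := Finset.mem_range.mp hn
    have hvn : ((n : ZMod p)).val = n := ZMod.val_cast_of_lt hlt
    by_cases he : Even n
    · by_cases h0 : n = 0
      · simp [h0, hw0]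
      · have hne : (n : ZMod p) ≠ 0 := by
          intro h; rw [← hvn, h, ZMod.val_zero] at h0; exact h0 rfl
        rw [hwy _ hne (by rw [hvn]; exact he)]; simp [he, h0]
    · rw [hwx _ (by rw [hvn]; exact Nat.not_even_iff_odd.mp he)]; simp [he]
  intro k
  constructor
  · intro hk
    have h1 : (∑ u : ZMod p, if φ (u + k) = true then w u else 0)
        = ∑ u : ZMod p, if Even u.val then w u else 0 := by
      apply Finset.sum_congr rfl
      intro u _
      have : (φ (u + k) = true) ↔ Even u.val := by rw [← hk]; exact hparity u k
      simp only [this]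
    rw [h1, sum_zmod_range]
    have h2 : (∑ n ∈ Finset.range p, if Even ((n : ZMod p)).val then w n else 0)
        = ∑ n ∈ Finset.range p, (if Even n then (if n = 0 then z else y) else 0) := by
      apply Finset.sum_congr rfl
      intro n hn
      have hlt : n < p := Finset.mem_range.mp hn
      rw [ZMod.val_cast_of_lt hlt, hwn n hn]
      by_cases he : Even n <;> simp [he]
    rw [h2, hpdiv, show p = 2 * q from hpq]
    exact sum_even_part q hq1 z y
  · intro hk
    have h1 : (∑ u : ZMod p, if φ (u + k) = true then w u else 0)
        = ∑ u : ZMod p, if ¬ Even u.val then w u else 0 := by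
      apply Finset.sum_congr rfl
      intro u _
      have hiff : (φ (u + k) = φ k) ↔ Even u.val := hparity u k
      rw [hk] at hiff
      have : (φ (u + k) = true) ↔ ¬ Even u.val := by
        constructor
        · intro ht he
          rw [hiff.mpr he] at ht; exact absurd ht (by simp)
        · intro he
          rcases Bool.eq_false_or_eq_true (φ (u + k)) with h | h
          · exact h
          · exact absurd (hiff.mp h) he
      simp only [this]
    rw [h1, sum_zmod_range]
    have h2 : (∑ n ∈ Finset.range p, if ¬ Even ((n : ZMod p)).val then w n else 0)
        = ∑ n ∈ Finset.range p, (if ¬ Even n then x else 0) := by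
      apply Finset.sum_congr rfl
      intro n hn
      have hlt : n < p := Finset.mem_range.mp hn
      rw [ZMod.val_cast_of_lt hlt, hwn n hn]
      by_cases he : Even n <;> simp [he]
    rw [h2, hpdiv, show p = 2 * q from hpq]
    exact sum_odd_part q x
end

section
/- Every alternate (1-antiperiodic) coloring φ of a Type 7 cycle is a constant 2-labelling with constants a = (p/2−1)y + z and b = (p/2−1)x + t. -/
lemma zmod_sum_val {p : ℕ} [NeZero p] (g : ℕ → ℝ) :
    (∑ u : ZMod p, g (ZMod.val u)) = ∑ i ∈ Finset.range p, g i := by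
  apply Finset.sum_nbij' (fun u => ZMod.val u) (fun i => (i : ZMod p))
  · intro u _; simpa using ZMod.val_lt u
  · intro i _; exact Finset.mem_univ _
  · intro u _; simp [ZMod.natCast_val, ZMod.cast_id]
  · intro i hi; exact ZMod.val_cast_of_lt (Finset.mem_range.mp hi)
  · intro u _; rfl

lemma card_even_range (n : ℕ) :
    ((Finset.range (2*n)).filter (fun i => i % 2 = 0)).card = n := by
  induction n with
  | zero => simp
  | succ n ih =>
    have : 2 * (n+1) = (2*n + 1) + 1 := by ring
    rw [this, Finset.range_add_one, Finset.range_add_one, Finset.filter_insert,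
      Finset.filter_insert]
    have h1 : ¬ (2*n+1) % 2 = 0 := by omega
    have h2 : (2*n) % 2 = 0 := by omega
    simp [h1, h2, Finset.card_insert_of_notMem, ih]

lemma card_odd_range (n : ℕ) :
    ((Finset.range (2*n)).filter (fun i => i % 2 = 1)).card = n := by
  induction n with
  | zero => simp
  | succ n ih =>
    have : 2 * (n+1) = (2*n + 1) + 1 := by ring
    rw [this, Finset.range_add_one, Finset.range_add_one, Finset.filter_insert,
      Finset.filter_insert]
    have h1 : (2*n+1) % 2 = 1 := by omega
    have h2 : ¬ (2*n) % 2 = 1 := by omega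
    simp [h1, h2, Finset.card_insert_of_notMem, ih]

/-- Every alternate coloring of a Type 7 cycle
(`z (xy)^((p-2)/4) t (yx)^((p-2)/4)`) is a constant 2-labelling with constants
`a = (p/2-1)y + z` and `b = (p/2-1)x + t`. -/
theorem type7_alternate_constant2Labelling
    (p : ℕ) [NeZero p] (hp : 6 ≤ p) (hp4 : p % 4 = 2)
    (w : ZMod p → ℝ) (z x y t : ℝ) (hxy : x ≠ y) (hxt : x ≠ t)
    (hw0 : w 0 = z) (hwt : w ((p / 2 : ℕ) : ZMod p) = t)
    (hwx : ∀ i : ℕ, 1 ≤ i → i < p / 2 → Odd i → w (i : ZMod p) = x)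
    (hwy : ∀ i : ℕ, 1 ≤ i → i < p / 2 → Even i → w (i : ZMod p) = y)
    (hwsym : ∀ i : ℕ, 1 ≤ i → i < p / 2 →
      w (((p - i : ℕ) : ZMod p)) = w (i : ZMod p))
    (φ : ZMod p → Bool) (halt : ∀ i : ZMod p, φ (i + 1) ≠ φ i) :
    ∀ k : ZMod p,
      (φ k = true → (∑ u : ZMod p, if φ (u + k) = true then w u else 0) =
        (((p / 2 : ℕ) : ℝ) - 1) * y + z) ∧
      (φ k = false → (∑ u : ZMod p, if φ (u + k) = true then w u else 0) =
        (((p / 2 : ℕ) : ℝ) - 1) * x + t) := by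
  have hpe : p % 2 = 0 := by omega
  have hhalf : (p / 2) % 2 = 1 := by omega
  have hhlt : p / 2 < p := by omega
  -- the alternate coloring is determined by parity
  have hA : ∀ n : ℕ, φ ((n : ℕ) : ZMod p) = xor (decide (n % 2 = 1)) (φ 0) := by
    intro n
    induction n with
    | zero => simp
    | succ n ih =>
      have h' : φ ((n : ZMod p) + 1) = !φ ((n : ZMod p)) := by
        have h := halt ((n : ZMod p))
        cases h1 : φ ((n : ZMod p) + 1) <;> cases h2 : φ ((n : ZMod p)) <;>
          simp_all
      have hc : (((n+1 : ℕ)) : ZMod p) = (n : ZMod p) + 1 := by push_cast; ring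
      rw [hc, h', ih]
      by_cases hn : n % 2 = 1
      · simp [hn, show ¬ (n+1) % 2 = 1 by omega]
      · simp [hn, show (n+1) % 2 = 1 by omega]
  have hu : ∀ u : ZMod p, ((ZMod.val u : ℕ) : ZMod p) = u := by
    intro u; simp [ZMod.natCast_val, ZMod.cast_id]
  have hφu : ∀ u k : ZMod p,
      φ (u + k) = xor (decide ((ZMod.val u + ZMod.val k) % 2 = 1)) (φ 0) := by
    intro u k
    have : (((ZMod.val u + ZMod.val k : ℕ)) : ZMod p) = u + k := by
      push_cast [hu]; ring
    rw [← this, hA]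
  -- value of w in terms of val
  have hW : ∀ u : ZMod p, w u =
      if ZMod.val u = 0 then z
      else if ZMod.val u % 2 = 1 then (if ZMod.val u = p / 2 then t else x)
      else y := by
    intro u
    have hv : ZMod.val u < p := ZMod.val_lt u
    set v := ZMod.val u with hvdef
    rcases Nat.eq_zero_or_pos v with h0 | h0
    · have : u = 0 := by rw [← hu u, ← hvdef, h0]; simp
      simp [h0, this, hw0]
    · rcases lt_trichotomy v (p / 2) with hlt | heq | hgt
      · have hne : v ≠ p / 2 := by omega
        rw [← hu u, ← hvdef]
        by_cases hodd : v % 2 = 1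
        · simp [hodd, hne, show v ≠ 0 by omega,
            hwx v h0 hlt (Nat.odd_iff.mpr hodd)]
        · simp [show v ≠ 0 by omega, hodd,
            hwy v h0 hlt (Nat.even_iff.mpr (by omega))]
      · have : u = ((p / 2 : ℕ) : ZMod p) := by rw [← hu u, ← hvdef, heq]
        simp [heq, show v ≠ 0 by omega, hhalf, show p / 2 ≠ 0 by omega,
          this, hwt]
      · set i := p - v with hidef
        have hi1 : 1 ≤ i := by omega
        have hi2 : i < p / 2 := by omega
        have hpar : i % 2 = v % 2 := by omega
        have hwu : w u = w ((i : ℕ) : ZMod p) := by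
          rw [← hu u, ← hvdef, show v = p - i by omega]
          exact hwsym i hi1 hi2
        by_cases hodd : v % 2 = 1
        · rw [hwu, hwx i hi1 hi2 (Nat.odd_iff.mpr (by omega))]
          simp [show v ≠ 0 by omega, hodd, show v ≠ p / 2 by omega]
        · rw [hwu, hwy i hi1 hi2 (Nat.even_iff.mpr (by omega))]
          simp [show v ≠ 0 by omega, hodd]
  intro k
  constructor
  · intro hk
    -- φ k = true: black set is the even residues
    have hk' : xor (decide (ZMod.val k % 2 = 1)) (φ 0) = true := by
      rw [← hA, hu]; exact hk
    have key : ∀ u : ZMod p, (φ (u + k) = true) ↔ (ZMod.val u % 2 = 0) := by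
      intro u
      rw [hφu]
      cases hb : φ 0 with
      | false => rw [hb] at hk'; simp at hk' ⊢; omega
      | true => rw [hb] at hk'; simp at hk' ⊢; omega
    have step1 : (∑ u : ZMod p, if φ (u + k) = true then w u else 0)
        = ∑ u : ZMod p, (fun v : ℕ =>
            (if v % 2 = 0 then y else 0) + (if v = 0 then z - y else 0))
            (ZMod.val u) := by
      apply Finset.sum_congr rfl
      intro u _
      rw [if_congr (key u) rfl rfl, hW u]
      by_cases h0 : ZMod.val u = 0
      · simp [h0]
      · by_cases he : ZMod.val u % 2 = 0
        · simp [h0, he, show ¬ ZMod.val u % 2 = 1 by omega]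
        · simp [h0, he, show ZMod.val u % 2 = 1 by omega]
    rw [step1, zmod_sum_val (fun v : ℕ =>
      (if v % 2 = 0 then y else 0) + (if v = 0 then z - y else 0)),
      Finset.sum_add_distrib]
    have hcard : ((Finset.range p).filter (fun i => i % 2 = 0)).card = p / 2 := by
      conv_lhs => rw [show p = 2 * (p / 2) by omega]
      exact card_even_range _
    rw [← Finset.sum_filter, Finset.sum_const, hcard,
      Finset.sum_ite_eq' (Finset.range p) 0 (fun _ => z - y)]
    simp only [Finset.mem_range, show (0:ℕ) < p by omega, if_pos,
      nsmul_eq_mul]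
    push_cast
    ring
  · intro hk
    have hk' : xor (decide (ZMod.val k % 2 = 1)) (φ 0) = false := by
      rw [← hA, hu]; exact hk
    have key : ∀ u : ZMod p, (φ (u + k) = true) ↔ (ZMod.val u % 2 = 1) := by
      intro u
      rw [hφu]
      cases hb : φ 0 with
      | false => rw [hb] at hk'; simp at hk' ⊢; omega
      | true => rw [hb] at hk'; simp at hk' ⊢; omega
    have step1 : (∑ u : ZMod p, if φ (u + k) = true then w u else 0)
        = ∑ u : ZMod p, (fun v : ℕ =>
            (if v % 2 = 1 then x else 0) + (if v = p / 2 then t - x else 0))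
            (ZMod.val u) := by
      apply Finset.sum_congr rfl
      intro u _
      rw [if_congr (key u) rfl rfl, hW u]
      by_cases hh : ZMod.val u = p / 2
      · simp [hh, hhalf, show ¬ p / 2 = 0 by omega]
      · by_cases he : ZMod.val u % 2 = 1
        · simp [hh, he, show ZMod.val u ≠ 0 by omega]
        · simp [hh, he]
    rw [step1, zmod_sum_val (fun v : ℕ =>
      (if v % 2 = 1 then x else 0) + (if v = p / 2 then t - x else 0)),
      Finset.sum_add_distrib]
    have hcard : ((Finset.range p).filter (fun i => i % 2 = 1)).card = p / 2 := by
      conv_lhs => rw [show p = 2 * (p / 2) by omega]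
      exact card_odd_range _
    rw [← Finset.sum_filter, Finset.sum_const, hcard,
      Finset.sum_ite_eq' (Finset.range p) (p/2) (fun _ => t - x)]
    simp only [Finset.mem_range, hhlt, if_pos, nsmul_eq_mul]
    push_cast
    ring
end

section
/- Let E = {(x₁,x₂) ∈ ℤ² : x₁+x₂ is even} be the even sublattice. For every integer r ≥ 1: if r is even then E is an (r, (r+1)², r²)-code of ℤ², and if r is odd then E is an (r, r², (r+1)²)-code of ℤ². -/
/-- The ball of radius `r` around `v` in `ℤ²` for the Manhattan metric. -/
def manhattanBall (r : ℕ) (v : ℤ × ℤ) : Set (ℤ × ℤ) :=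
  {u : ℤ × ℤ | (u.1 - v.1).natAbs + (u.2 - v.2).natAbs ≤ r}

/-- `S ⊆ ℤ²` is an `(r,a,b)`-code: every element of `S` has exactly `a` elements
of `S` in its radius-`r` ball, and every element of the complement has exactly `b`. -/
def IsRabCode (r a b : ℕ) (S : Set (ℤ × ℤ)) : Prop :=
  (∀ v ∈ S, (S ∩ manhattanBall r v).ncard = a) ∧
  (∀ v : ℤ × ℤ, v ∉ S → (S ∩ manhattanBall r v).ncard = b)

lemma count_even (r : ℕ) (v : ℤ × ℤ) (hv : Even (v.1 + v.2)) :
    ({x : ℤ × ℤ | Even (x.1 + x.2)} ∩ manhattanBall r v).ncard = (2 * (r / 2) + 1) ^ 2 := by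
  obtain ⟨v1, v2⟩ := v
  rw [Int.even_iff] at hv
  simp only at hv
  have hset : {x : ℤ × ℤ | Even (x.1 + x.2)} ∩ manhattanBall r (v1, v2) =
      ↑((Finset.Icc (-((r / 2 : ℕ) : ℤ)) ((r / 2 : ℕ) : ℤ) ×ˢ
         Finset.Icc (-((r / 2 : ℕ) : ℤ)) ((r / 2 : ℕ) : ℤ)).image
        (fun ij : ℤ × ℤ => (v1 + ij.1 + ij.2, v2 + ij.1 - ij.2))) := by
    ext ⟨u1, u2⟩
    simp only [Set.mem_inter_iff, Set.mem_setOf_eq, manhattanBall, Finset.coe_image,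
      Set.mem_image, Finset.mem_coe, Finset.mem_product, Finset.mem_Icc, Int.even_iff,
      Prod.mk.injEq, Prod.exists]
    constructor
    · rintro ⟨he, hb⟩
      exact ⟨(u1 - v1 + (u2 - v2)) / 2, (u1 - v1 - (u2 - v2)) / 2,
        ⟨⟨by omega, by omega⟩, by omega, by omega⟩, by omega, by omega⟩
    · rintro ⟨i, j, ⟨⟨hi1, hi2⟩, hj1, hj2⟩, h1, h2⟩
      constructor
      · omega
      · omega
  rw [hset, Set.ncard_coe_finset]
  have hinj : Function.Injective (fun ij : ℤ × ℤ => (v1 + ij.1 + ij.2, v2 + ij.1 - ij.2)) := by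
    rintro ⟨a, b⟩ ⟨c, d⟩ h
    simp only [Prod.mk.injEq] at h ⊢
    omega
  rw [Finset.card_image_of_injective _ hinj, Finset.card_product, Int.card_Icc]
  have hX : ((((r / 2 : ℕ) : ℤ)) + 1 - -((r / 2 : ℕ) : ℤ)).toNat = 2 * (r / 2) + 1 := by omega
  rw [hX, pow_two]

lemma count_odd (r : ℕ) (hr : 1 ≤ r) (v : ℤ × ℤ) (hv : ¬ Even (v.1 + v.2)) :
    ({x : ℤ × ℤ | Even (x.1 + x.2)} ∩ manhattanBall r v).ncard =
      ((r + 1) / 2 + (r - 1) / 2 + 1) ^ 2 := by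
  obtain ⟨v1, v2⟩ := v
  rw [Int.not_even_iff] at hv
  simp only at hv
  have hset : {x : ℤ × ℤ | Even (x.1 + x.2)} ∩ manhattanBall r (v1, v2) =
      ↑((Finset.Icc (-(((r + 1) / 2 : ℕ) : ℤ)) (((r - 1) / 2 : ℕ) : ℤ) ×ˢ
         Finset.Icc (-(((r + 1) / 2 : ℕ) : ℤ)) (((r - 1) / 2 : ℕ) : ℤ)).image
        (fun ij : ℤ × ℤ => (v1 + ij.1 + ij.2 + 1, v2 + ij.1 - ij.2))) := by
    ext ⟨u1, u2⟩
    simp only [Set.mem_inter_iff, Set.mem_setOf_eq, manhattanBall, Finset.coe_image,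
      Set.mem_image, Finset.mem_coe, Finset.mem_product, Finset.mem_Icc, Int.even_iff,
      Prod.mk.injEq, Prod.exists]
    constructor
    · rintro ⟨he, hb⟩
      refine ⟨(u1 - v1 + (u2 - v2) - 1) / 2, (u1 - v1 - (u2 - v2) - 1) / 2,
        ⟨⟨?_, ?_⟩, ?_, ?_⟩, ?_, ?_⟩
      · omega
      · omega
      · omega
      · omega
      · omega
      · omega
    · rintro ⟨i, j, ⟨⟨hi1, hi2⟩, hj1, hj2⟩, h1, h2⟩
      constructor
      · omega
      · omega
  rw [hset, Set.ncard_coe_finset]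
  have hinj : Function.Injective (fun ij : ℤ × ℤ => (v1 + ij.1 + ij.2 + 1, v2 + ij.1 - ij.2)) := by
    rintro ⟨a, b⟩ ⟨c, d⟩ h
    simp only [Prod.mk.injEq] at h ⊢
    omega
  rw [Finset.card_image_of_injective _ hinj, Finset.card_product, Int.card_Icc]
  have hX : ((((r - 1) / 2 : ℕ) : ℤ) + 1 - -(((r + 1) / 2 : ℕ) : ℤ)).toNat
      = (r + 1) / 2 + (r - 1) / 2 + 1 := by omega
  rw [hX, pow_two]

/-- The even sublattice `{(x₁,x₂) : x₁ + x₂ even}` is an `(r,(r+1)²,r²)`-code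
for even `r ≥ 1` and an `(r,r²,(r+1)²)`-code for odd `r ≥ 1`. -/
theorem evenSublattice_code (r : ℕ) (hr : 1 ≤ r) :
    (Even r → IsRabCode r ((r + 1) ^ 2) (r ^ 2)
        {x : ℤ × ℤ | Even (x.1 + x.2)}) ∧
    (Odd r → IsRabCode r (r ^ 2) ((r + 1) ^ 2)
        {x : ℤ × ℤ | Even (x.1 + x.2)}) := by
  constructor
  · intro he
    rw [Nat.even_iff] at he
    constructor
    · intro v hv
      rw [count_even r v hv]
      congr 1
      omega
    · intro v hv
      rw [count_odd r hr v hv]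
      congr 1
      omega
  · intro ho
    rw [Nat.odd_iff] at ho
    constructor
    · intro v hv
      rw [count_even r v hv]
      congr 1
      omega
    · intro v hv
      rw [count_odd r hr v hv]
      congr 1
      omega
end

section
/- Let r ≥ 2 be even and let B be a nonempty subset of ZMod (r+1). Then the diagonal coloring S_B = {(x₁,x₂) ∈ ℤ² : the residue of x₁−x₂ modulo r+1 belongs to B} is an (r, a, b)-code of ℤ² with a = (r+1) + (|B|−1)(2r+1) and b = |B|(2r+1). -/
open Finset

noncomputable def ballF (r : ℕ) : Finset (ℤ × ℤ) :=
  ((Finset.Icc (-(r:ℤ)) r) ×ˢ (Finset.Icc (-(r:ℤ)) r)).filter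
    (fun d => d.1.natAbs + d.2.natAbs ≤ r)

lemma mem_ballF {r : ℕ} {d : ℤ × ℤ} :
    d ∈ ballF r ↔ d.1.natAbs + d.2.natAbs ≤ r := by
  simp only [ballF, Finset.mem_filter, Finset.mem_product, Finset.mem_Icc]
  omega

lemma line_count {r : ℕ} (hre : Even r) (k : ℤ) (hk : k.natAbs ≤ r) :
    ((ballF r).filter (fun d => d.1 - d.2 = k)).card
      = if Even k then r + 1 else r := by
  have himg : (ballF r).filter (fun d => d.1 - d.2 = k)
      = (Finset.Icc (-(((r:ℤ) - k)/2)) ((k + r)/2)).image (fun a => (a, a - k)) := by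
    ext ⟨x, y⟩
    simp only [Finset.mem_filter, mem_ballF, Finset.mem_image, Finset.mem_Icc]
    constructor
    · rintro ⟨h1, h2⟩
      exact ⟨x, by omega, by simp; omega⟩
    · rintro ⟨a, ⟨ha1, ha2⟩, h⟩
      obtain ⟨rfl, rfl⟩ : a = x ∧ a - k = y := by
        constructor <;> [exact congrArg Prod.fst h; exact congrArg Prod.snd h]
      omega
  rw [himg, Finset.card_image_of_injective _ (fun a b h => by simpa using congrArg Prod.fst h),
    Int.card_Icc]
  obtain ⟨m, hm⟩ := hre
  rcases Int.even_or_odd k with hev | hod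
  · rw [if_pos hev]
    rw [Int.even_iff] at hev
    omega
  · rw [if_neg (by simpa [Int.not_even_iff_odd] using hod)]
    rw [Int.odd_iff] at hod
    omega

lemma cast_eq_iff {r : ℕ} (c : ZMod (r+1)) (x : ℤ) :
    ((x : ZMod (r+1)) = c) ↔ (((r:ℤ)+1) ∣ (x - (c.val : ℤ))) := by
  have h1 : ((c.val : ℤ) : ZMod (r+1)) = c := by
    rw [Int.cast_natCast, ZMod.natCast_val, ZMod.cast_id]
  rw [← sub_eq_zero, show (x : ZMod (r+1)) - c = ((x - (c.val:ℤ) : ℤ) : ZMod (r+1)) by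
    push_cast [h1]; ring]
  rw [ZMod.intCast_zmod_eq_zero_iff_dvd]
  push_cast
  rfl

lemma dvd_window {r : ℕ} (c : ZMod (r+1)) (k : ℤ) (hk : k.natAbs ≤ r) :
    (((r:ℤ)+1) ∣ (k - (c.val : ℤ))) ↔ (k = (c.val:ℤ) ∨ k = (c.val:ℤ) - ((r:ℤ)+1)) := by
  have hv : c.val < r + 1 := ZMod.val_lt c
  constructor
  · rintro ⟨t, ht⟩
    have hk' : -(r:ℤ) ≤ k ∧ k ≤ (r:ℤ) := by omega
    have ht0 : t ≤ 0 := by nlinarith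
    have ht1 : -1 ≤ t := by nlinarith
    interval_cases t <;> omega
  · rintro (rfl | h)
    · simp
    · exact ⟨-1, by omega⟩

lemma residue_count {r : ℕ} (hre : Even r) (c : ZMod (r+1)) :
    ((ballF r).filter (fun d => ((d.1 - d.2 : ℤ) : ZMod (r+1)) = c)).card
      = if c = 0 then r + 1 else 2 * r + 1 := by
  have hsplit : (ballF r).filter (fun d => ((d.1 - d.2 : ℤ) : ZMod (r+1)) = c)
      = (ballF r).filter (fun d => d.1 - d.2 = (c.val:ℤ))
        ∪ (ballF r).filter (fun d => d.1 - d.2 = (c.val:ℤ) - ((r:ℤ)+1)) := by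
    rw [← Finset.filter_or]
    apply Finset.filter_congr
    intro d hd
    rw [mem_ballF] at hd
    have hb : (d.1 - d.2).natAbs ≤ r := by omega
    rw [cast_eq_iff, dvd_window c _ hb]
  by_cases h0 : c = 0
  · subst h0
    have hval : (ZMod.val (0 : ZMod (r+1)) : ℤ) = 0 := by
      simp [ZMod.val_zero]
    rw [if_pos rfl, hsplit]
    have h2 : (ballF r).filter (fun d => d.1 - d.2 = (ZMod.val (0 : ZMod (r+1)):ℤ) - ((r:ℤ)+1)) = ∅ := by
      apply Finset.filter_false_of_mem
      intro d hd
      rw [mem_ballF] at hd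
      omega
    rw [h2, Finset.union_empty, line_count hre _ (by omega)]
    rw [if_pos (by rw [hval]; exact Even.zero)]
  · rw [if_neg h0, hsplit]
    have hv : c.val < r + 1 := ZMod.val_lt c
    have hv1 : 1 ≤ c.val := by
      rcases Nat.eq_zero_or_pos c.val with h | h
      · exact absurd ((ZMod.val_eq_zero c).mp h) h0
      · exact h
    rw [Finset.card_union_of_disjoint]
    · rw [line_count hre _ (by omega), line_count hre _ (by omega)]
      obtain ⟨m, hm⟩ := hre
      rcases Int.even_or_odd (c.val : ℤ) with hev | hod
      · rw [if_pos hev, if_neg]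
        · omega
        · rw [Int.even_iff] at hev ⊢
          omega
      · rw [if_neg (by simpa [Int.not_even_iff_odd] using hod), if_pos]
        · omega
        · rw [Int.odd_iff] at hod
          rw [Int.even_iff]
          omega
    · rw [Finset.disjoint_left]
      intro d hd1 hd2
      simp only [Finset.mem_filter] at hd1 hd2
      omega

open Classical in
lemma main_count {r : ℕ} (hre : Even r) (B : Set (ZMod (r+1))) (v : ℤ × ℤ) :
    ({x : ℤ × ℤ | ((x.1 - x.2 : ℤ) : ZMod (r + 1)) ∈ B} ∩ manhattanBall r v).ncard
      = if ((v.1 - v.2 : ℤ) : ZMod (r+1)) ∈ B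
        then (r + 1) + (B.ncard - 1) * (2 * r + 1)
        else B.ncard * (2 * r + 1) := by
  classical
  set ρ : ZMod (r+1) := ((v.1 - v.2 : ℤ) : ZMod (r+1)) with hρ
  set F : Finset (ℤ × ℤ) :=
    ((ballF r).filter (fun d => ((d.1 - d.2 : ℤ) : ZMod (r+1)) + ρ ∈ B)).image
      (fun d => (d.1 + v.1, d.2 + v.2)) with hF
  have hcastadd : ∀ x y : ℤ, ((x - v.1) - (y - v.2) : ℤ) = (x - y) - (v.1 - v.2) := by
    intro x y; ring
  have hset : {x : ℤ × ℤ | ((x.1 - x.2 : ℤ) : ZMod (r + 1)) ∈ B} ∩ manhattanBall r v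
      = (F : Set (ℤ × ℤ)) := by
    ext ⟨x, y⟩
    simp only [Set.mem_inter_iff, Set.mem_setOf_eq, manhattanBall, hF, Finset.coe_image,
      Set.mem_image, Finset.mem_coe, Finset.mem_filter, mem_ballF, Prod.exists]
    constructor
    · rintro ⟨hmem, hball⟩
      refine ⟨x - v.1, y - v.2, ⟨hball, ?_⟩, by simp⟩
      have : (((x - v.1) - (y - v.2) : ℤ) : ZMod (r+1)) + ρ = ((x - y : ℤ) : ZMod (r+1)) := by
        rw [hρ]; push_cast; ring
      rw [this]; exact hmem
    · rintro ⟨a, b, ⟨hball, hmem⟩, heq⟩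
      obtain ⟨rfl, rfl⟩ : a + v.1 = x ∧ b + v.2 = y :=
        ⟨congrArg Prod.fst heq, congrArg Prod.snd heq⟩
      constructor
      · have : (((a + v.1) - (b + v.2) : ℤ) : ZMod (r+1))
            = ((a - b : ℤ) : ZMod (r+1)) + ρ := by
          rw [hρ]; push_cast; ring
        rw [this]; exact hmem
      · simpa using hball
  rw [hset, Set.ncard_coe_finset, hF,
    Finset.card_image_of_injective _ (fun a b h => by
      have h1 := congrArg Prod.fst h
      have h2 := congrArg Prod.snd h
      simp at h1 h2
      exact Prod.ext h1 h2)]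
  -- fiberwise counting
  set C : Finset (ZMod (r+1)) := Finset.univ.filter (fun x => x + ρ ∈ B) with hC
  rw [Finset.card_eq_sum_card_fiberwise
    (f := fun d : ℤ × ℤ => ((d.1 - d.2 : ℤ) : ZMod (r+1))) (t := C)
    (fun d hd => by
      simp only [hC, Finset.coe_filter, Set.mem_setOf_eq, Finset.mem_filter, Finset.mem_univ, true_and]
      exact (Finset.mem_filter.mp hd).2)]
  have hfiber : ∀ c ∈ C,
      (((ballF r).filter (fun d => ((d.1 - d.2 : ℤ) : ZMod (r+1)) + ρ ∈ B)).filter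
        (fun d => ((d.1 - d.2 : ℤ) : ZMod (r+1)) = c)).card
      = if c = 0 then r + 1 else 2 * r + 1 := by
    intro c hc
    rw [Finset.filter_filter]
    have : (ballF r).filter
        (fun d => ((d.1 - d.2 : ℤ) : ZMod (r+1)) + ρ ∈ B ∧ ((d.1 - d.2 : ℤ) : ZMod (r+1)) = c)
        = (ballF r).filter (fun d => ((d.1 - d.2 : ℤ) : ZMod (r+1)) = c) := by
      apply Finset.filter_congr
      intro d _
      constructor
      · exact fun h => h.2
      · intro h
        refine ⟨?_, h⟩
        rw [h]
        simpa [hC] using hc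
    rw [this, residue_count hre]
  rw [Finset.sum_congr rfl hfiber]
  -- relate C to B
  have hBfin : B.Finite := B.toFinite
  have hCcard : C.card = B.ncard := by
    have himg : C = hBfin.toFinset.image (fun b => b - ρ) := by
      ext x
      simp only [hC, Finset.mem_filter, Finset.mem_univ, true_and, Finset.mem_image,
        Set.Finite.mem_toFinset]
      constructor
      · intro h; exact ⟨x + ρ, h, by ring⟩
      · rintro ⟨b, hb, rfl⟩; simpa using hb
    rw [himg, Finset.card_image_of_injective _ (sub_left_injective),
      Set.ncard_eq_toFinset_card B hBfin]
  have h0C : ((0 : ZMod (r+1)) ∈ C) ↔ ρ ∈ B := by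
    simp [hC]
  by_cases hv : ρ ∈ B
  · rw [if_pos hv]
    have h0 : (0 : ZMod (r+1)) ∈ C := h0C.mpr hv
    rw [← Finset.add_sum_erase _ _ h0, if_pos rfl]
    have : ∑ c ∈ C.erase 0, (if c = 0 then r + 1 else 2 * r + 1)
        = (C.card - 1) * (2 * r + 1) := by
      rw [Finset.sum_congr rfl (fun c hc => if_neg (Finset.ne_of_mem_erase hc)),
        Finset.sum_const, Finset.card_erase_of_mem h0, smul_eq_mul]
    rw [this, hCcard]
  · rw [if_neg hv]
    have : ∀ c ∈ C, (if c = (0:ZMod (r+1)) then r + 1 else 2 * r + 1) = 2 * r + 1 := by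
      intro c hc
      rw [if_neg]
      rintro rfl
      exact hv (h0C.mp hc)
    rw [Finset.sum_congr rfl this, Finset.sum_const, smul_eq_mul, hCcard]

/-- For even `r ≥ 2` and a nonempty `B ⊆ ZMod (r+1)`, the diagonal coloring
`S_B = {(x₁,x₂) : (x₁ - x₂ mod r+1) ∈ B}` is an `(r,a,b)`-code with
`a = (r+1) + (|B|-1)(2r+1)` and `b = |B|(2r+1)`. -/
theorem diagonal_code_even (r : ℕ) (hr : 2 ≤ r) (hre : Even r)
    (B : Set (ZMod (r + 1))) (hB : B.Nonempty) :
    IsRabCode r ((r + 1) + (B.ncard - 1) * (2 * r + 1)) (B.ncard * (2 * r + 1))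
      {x : ℤ × ℤ | ((x.1 - x.2 : ℤ) : ZMod (r + 1)) ∈ B} := by
  constructor
  · intro v hv
    rw [main_count hre B v]; exact if_pos hv
  · intro v hv
    rw [main_count hre B v]; exact if_neg hv
end

section
/- Let r ≥ 3 be odd and let B be a nonempty subset of ZMod r. Then the diagonal coloring S_B = {(x₁,x₂) ∈ ℤ² : the residue of x₁−x₂ modulo r belongs to B} is an (r, a, b)-code of ℤ² with a = (3r+2) + (|B|−1)(2r+1) and b = |B|(2r+1). -/
open Finset


lemma card_evens (r m : ℕ) (hm : r = 2*m+1) :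
    ((Finset.Icc (-(r:ℤ)) r).filter (fun s => (2:ℤ) ∣ s)).card = r := by
  have h : (Finset.Icc (-(r:ℤ)) r).filter (fun s => (2:ℤ) ∣ s)
      = (Finset.Icc (-(m:ℤ)) m).image (fun j => 2*j) := by
    ext s
    simp only [mem_filter, mem_Icc, mem_image]
    constructor
    · rintro ⟨⟨h1, h2⟩, j, rfl⟩
      exact ⟨j, ⟨by omega, by omega⟩, by ring⟩
    · rintro ⟨j, ⟨h1,h2⟩, rfl⟩
      exact ⟨⟨by omega, by omega⟩, j, by ring⟩
  rw [h, Finset.card_image_of_injective _ (fun a b h => by omega), Int.card_Icc]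
  omega

lemma card_odds (r m : ℕ) (hm : r = 2*m+1) :
    ((Finset.Icc (-(r:ℤ)) r).filter (fun s => ¬ (2:ℤ) ∣ s)).card = r + 1 := by
  have h : (Finset.Icc (-(r:ℤ)) r).filter (fun s => ¬ (2:ℤ) ∣ s)
      = (Finset.Icc (-(m:ℤ)-1) m).image (fun j => 2*j+1) := by
    ext s
    simp only [mem_filter, mem_Icc, mem_image]
    constructor
    · rintro ⟨⟨h1, h2⟩, hodd⟩
      refine ⟨(s-1)/2, ⟨?_, ?_⟩, ?_⟩ <;> omega
    · rintro ⟨j, ⟨h1,h2⟩, rfl⟩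
      refine ⟨⟨by omega, by omega⟩, by omega⟩
  rw [h, Finset.card_image_of_injective _ (fun a b h => by omega), Int.card_Icc]
  omega

lemma card_slice (r m : ℕ) (hm : r = 2*m+1) (k : ℤ) :
    ((Finset.Icc (-(r:ℤ)) r).filter (fun s => (2:ℤ) ∣ (k+s))).card
      = if (2:ℤ) ∣ k then r else r+1 := by
  by_cases hk : (2:ℤ) ∣ k
  · have h : (Finset.Icc (-(r:ℤ)) r).filter (fun s => (2:ℤ) ∣ (k+s))
        = (Finset.Icc (-(r:ℤ)) r).filter (fun s => (2:ℤ) ∣ s) := by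
      ext s; simp only [mem_filter]
      constructor <;> rintro ⟨h1, h2⟩ <;> exact ⟨h1, by omega⟩
    rw [if_pos hk, h, card_evens r m hm]
  · have h : (Finset.Icc (-(r:ℤ)) r).filter (fun s => (2:ℤ) ∣ (k+s))
        = (Finset.Icc (-(r:ℤ)) r).filter (fun s => ¬ (2:ℤ) ∣ s) := by
      ext s; simp only [mem_filter]
      constructor <;> rintro ⟨h1, h2⟩ <;> exact ⟨h1, by omega⟩
    rw [if_neg hk, h, card_odds r m hm]



lemma char_res (r : ℕ) [NeZero r] (k : ℤ) (t₀ : ZMod r) :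
    ((k : ZMod r) = t₀) ↔ (r:ℤ) ∣ ((t₀.val : ℤ) - k) := by
  have h1 : ((t₀.val : ℤ) : ZMod r) = t₀ := by
    push_cast
    exact ZMod.natCast_rightInverse t₀
  conv_lhs => rw [← h1]
  rw [ZMod.intCast_eq_intCast_iff, Int.modEq_iff_dvd]

lemma K_eq_zero (r m : ℕ) (hm : r = 2*m+1) (hr : 3 ≤ r) :
    (Finset.Icc (-(r:ℤ)) r).filter (fun k : ℤ => ((k : ℤ) : ZMod r) = (0 : ZMod r))
      = {-(r:ℤ), 0, (r:ℤ)} := by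
  haveI : NeZero r := ⟨by omega⟩
  ext k
  simp only [mem_filter, mem_Icc, mem_insert, mem_singleton, char_res,
    ZMod.val_zero, Int.natCast_zero, zero_sub]
  constructor
  · rintro ⟨⟨h1, h2⟩, c, hc⟩
    have hr0 : (0:ℤ) < r := by omega
    have hc1 : c ≤ 1 := by nlinarith
    have hc2 : -1 ≤ c := by nlinarith
    interval_cases c <;> omega
  · rintro (rfl | rfl | rfl)
    · exact ⟨⟨by omega, by omega⟩, 1, by ring⟩
    · exact ⟨⟨by omega, by omega⟩, 0, by ring⟩
    · exact ⟨⟨by omega, by omega⟩, -1, by ring⟩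

lemma K_eq_ne (r m : ℕ) (hm : r = 2*m+1) (hr : 3 ≤ r) (t₀ : ZMod r) (ht : t₀ ≠ 0) :
    (Finset.Icc (-(r:ℤ)) r).filter (fun k : ℤ => ((k : ℤ) : ZMod r) = t₀)
      = {(t₀.val : ℤ) - r, (t₀.val : ℤ)} := by
  haveI : NeZero r := ⟨by omega⟩
  have hv1 : 1 ≤ t₀.val := by
    rcases Nat.eq_zero_or_pos t₀.val with h | h
    · exact absurd ((ZMod.val_eq_zero t₀).mp h) ht
    · exact h
  have hv2 : t₀.val < r := ZMod.val_lt t₀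
  ext k
  simp only [mem_filter, mem_Icc, mem_insert, mem_singleton, char_res]
  constructor
  · rintro ⟨⟨h1, h2⟩, c, hc⟩
    have hr0 : (0:ℤ) < r := by omega
    have hv1' : (1:ℤ) ≤ (t₀.val : ℤ) := by exact_mod_cast hv1
    have hv2' : ((t₀.val : ℤ)) < r := by exact_mod_cast hv2
    have hc1 : c ≤ 1 := by nlinarith
    have hc2 : 0 ≤ c := by nlinarith
    interval_cases c <;> omega
  · rintro (rfl | rfl)
    · exact ⟨⟨by omega, by push_cast; omega⟩, 1, by ring⟩
    · refine ⟨⟨by push_cast; omega, by push_cast; omega⟩, 0, by ring⟩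

lemma card_X (r m : ℕ) (hm : r = 2*m+1) (hr : 3 ≤ r) (t₀ : ZMod r) :
    (((Finset.Icc (-(r:ℤ)) r) ×ˢ (Finset.Icc (-(r:ℤ)) r)).filter
      (fun p => (2:ℤ) ∣ (p.1 + p.2) ∧ (((p.1 : ℤ) : ZMod r) = t₀))).card
    = if t₀ = 0 then 3*r+2 else 2*r+1 := by
  haveI : NeZero r := ⟨by omega⟩
  set X := (((Finset.Icc (-(r:ℤ)) r) ×ˢ (Finset.Icc (-(r:ℤ)) r)).filter
      (fun p => (2:ℤ) ∣ (p.1 + p.2) ∧ (((p.1 : ℤ) : ZMod r) = t₀))) with hX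
  set K := (Finset.Icc (-(r:ℤ)) r).filter (fun k : ℤ => ((k : ℤ) : ZMod r) = t₀) with hK
  have hfib : ∀ k ∈ K, (X.filter (fun p => p.1 = k)).card
      = if (2:ℤ) ∣ k then r else r+1 := by
    intro k hk
    rw [hK, mem_filter, mem_Icc] at hk
    have h : X.filter (fun p => p.1 = k)
        = {k} ×ˢ ((Finset.Icc (-(r:ℤ)) r).filter (fun s => (2:ℤ) ∣ (k+s))) := by
      ext ⟨a, b⟩
      simp only [hX, mem_filter, mem_product, mem_Icc, mem_singleton]
      constructor
      · rintro ⟨⟨⟨ha, hb⟩, hd, hres⟩, rfl⟩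
        exact ⟨rfl, hb, hd⟩
      · rintro ⟨rfl, hb, hd⟩
        exact ⟨⟨⟨hk.1, hb⟩, hd, hk.2⟩, rfl⟩
    rw [h, Finset.card_product, Finset.card_singleton, one_mul, card_slice r m hm k]
  have hsum : X.card = ∑ k ∈ K, (if (2:ℤ) ∣ k then r else r+1) := by
    rw [Finset.card_eq_sum_card_fiberwise (f := Prod.fst) (t := K)
      (fun p hp => by
        simp only [Finset.mem_coe, hX, mem_filter, mem_product] at hp
        rw [Finset.mem_coe, hK, mem_filter]
        exact ⟨hp.1.1, hp.2.2⟩)]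
    exact Finset.sum_congr rfl hfib
  by_cases ht : t₀ = 0
  · subst ht
    rw [if_pos rfl, hsum, hK, K_eq_zero r m hm hr]
    have h1 : ¬ (2:ℤ) ∣ (-(r:ℤ)) := by omega
    have h2 : (2:ℤ) ∣ (0:ℤ) := ⟨0, by ring⟩
    have h3 : ¬ (2:ℤ) ∣ ((r:ℤ)) := by omega
    rw [Finset.sum_insert (by simp; omega), Finset.sum_insert (by simp; omega),
      Finset.sum_singleton, if_neg h1, if_pos h2, if_neg h3]
    ring
  · rw [if_neg ht, hsum, hK, K_eq_ne r m hm hr t₀ ht]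
    have hne : ((t₀.val : ℤ) - r) ≠ (t₀.val : ℤ) := by omega
    rw [Finset.sum_insert (by simpa using hne), Finset.sum_singleton]
    by_cases he : (2:ℤ) ∣ (t₀.val : ℤ)
    · have ho : ¬ (2:ℤ) ∣ ((t₀.val : ℤ) - r) := by omega
      rw [if_neg ho, if_pos he]; ring
    · have ho : (2:ℤ) ∣ ((t₀.val : ℤ) - r) := by omega
      rw [if_pos ho, if_neg he]; ring

lemma card_Fc (r m : ℕ) (hm : r = 2*m+1) (hr : 3 ≤ r) (v : ℤ × ℤ) (c : ZMod r) :
    ((((Finset.Icc (v.1-(r:ℤ)) (v.1+r)) ×ˢ (Finset.Icc (v.2-(r:ℤ)) (v.2+r))).filter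
      (fun u => (u.1 - v.1).natAbs + (u.2 - v.2).natAbs ≤ r ∧
        (((u.1 - u.2 : ℤ) : ZMod r) = c))).card)
    = if c = ((v.1 - v.2 : ℤ) : ZMod r) then 3*r+2 else 2*r+1 := by
  haveI : NeZero r := ⟨by omega⟩
  have key := card_X r m hm hr (c - ((v.1 - v.2 : ℤ) : ZMod r))
  rw [Finset.card_bij (t := (((Finset.Icc (-(r:ℤ)) r) ×ˢ (Finset.Icc (-(r:ℤ)) r)).filter
      (fun p => (2:ℤ) ∣ (p.1 + p.2) ∧
        (((p.1 : ℤ) : ZMod r) = c - ((v.1 - v.2 : ℤ) : ZMod r)))))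
    (fun u _ => (u.1 - u.2 - (v.1 - v.2), u.1 + u.2 - (v.1 + v.2))) ?_ ?_ ?_, key]
  · congr 1
    rw [eq_comm, sub_eq_zero, eq_comm]
  · -- maps into target
    rintro ⟨a, b⟩ hu
    simp only [mem_filter, mem_product, mem_Icc] at hu ⊢
    obtain ⟨⟨⟨ha1, ha2⟩, hb1, hb2⟩, habs, hres⟩ := hu
    refine ⟨⟨⟨by omega, by omega⟩, by omega, by omega⟩, ⟨a - v.1, by ring⟩, ?_⟩
    push_cast at hres ⊢
    linear_combination hres
  · -- injective
    rintro ⟨a1, a2⟩ h1 ⟨b1, b2⟩ h2 heq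
    simp only [Prod.mk.injEq] at heq ⊢
    omega
  · -- surjective
    rintro ⟨k, s⟩ hp
    simp only [mem_filter, mem_product, mem_Icc] at hp
    obtain ⟨⟨⟨hk1, hk2⟩, hs1, hs2⟩, ⟨d, hd⟩, hres⟩ := hp
    refine ⟨(v.1 + d, v.2 + (d - k)), ?_, ?_⟩
    · simp only [mem_filter, mem_product, mem_Icc]
      refine ⟨⟨⟨by omega, by omega⟩, by omega, by omega⟩, by omega, ?_⟩
      have harith : (v.1 + d) - (v.2 + (d - k)) = (v.1 - v.2) + k := by ring
      simp only [harith]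
      push_cast at hres ⊢
      linear_combination hres
    · simp only [Prod.mk.injEq]
      constructor <;> ring_nf <;> omega

open Classical in
lemma count_ball (r m : ℕ) [NeZero r] (hm : r = 2*m+1) (hr : 3 ≤ r)
    (B : Set (ZMod r)) (v : ℤ × ℤ) :
    ({x : ℤ × ℤ | ((x.1 - x.2 : ℤ) : ZMod r) ∈ B} ∩ manhattanBall r v).ncard
    = (Set.toFinite B).toFinset.card * (2*r+1) +
      (if ((v.1 - v.2 : ℤ) : ZMod r) ∈ B then r + 1 else 0) := by
  haveI : NeZero r := ⟨by omega⟩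
  classical
  set B' := (Set.toFinite B).toFinset with hB'
  set F := (((Finset.Icc (v.1-(r:ℤ)) (v.1+r)) ×ˢ (Finset.Icc (v.2-(r:ℤ)) (v.2+r))).filter
      (fun u => (u.1 - v.1).natAbs + (u.2 - v.2).natAbs ≤ r ∧
        (((u.1 - u.2 : ℤ) : ZMod r) ∈ B'))) with hF
  have hset : {x : ℤ × ℤ | ((x.1 - x.2 : ℤ) : ZMod r) ∈ B} ∩ manhattanBall r v = ↑F := by
    ext u
    simp only [Set.mem_inter_iff, Set.mem_setOf_eq, manhattanBall, hF, Finset.coe_filter,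
      mem_product, mem_Icc, Set.Finite.mem_toFinset, hB']
    constructor
    · rintro ⟨h1, h2⟩
      exact ⟨⟨⟨by omega, by omega⟩, by omega, by omega⟩, h2, h1⟩
    · rintro ⟨_, h2, h1⟩
      exact ⟨h1, h2⟩
  rw [hset, Set.ncard_coe_finset]
  have hsum : F.card = ∑ c ∈ B', (if c = ((v.1 - v.2 : ℤ) : ZMod r) then 3*r+2 else 2*r+1) := by
    rw [Finset.card_eq_sum_card_fiberwise
      (f := fun u : ℤ × ℤ => ((u.1 - u.2 : ℤ) : ZMod r)) (t := B')
      (fun u hu => by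
        simp only [Finset.mem_coe, hF, mem_filter] at hu
        exact hu.2.2)]
    refine Finset.sum_congr rfl (fun c hc => ?_)
    have hFc : F.filter (fun u : ℤ × ℤ => ((u.1 - u.2 : ℤ) : ZMod r) = c)
        = (((Finset.Icc (v.1-(r:ℤ)) (v.1+r)) ×ˢ (Finset.Icc (v.2-(r:ℤ)) (v.2+r))).filter
          (fun u => (u.1 - v.1).natAbs + (u.2 - v.2).natAbs ≤ r ∧
            (((u.1 - u.2 : ℤ) : ZMod r) = c))) := by
      ext u
      simp only [hF, mem_filter, Finset.filter_filter]
      constructor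
      · rintro ⟨hbox, ⟨habs, _⟩, hres⟩
        exact ⟨hbox, habs, hres⟩
      · rintro ⟨hbox, habs, hres⟩
        exact ⟨hbox, ⟨habs, hres ▸ hc⟩, hres⟩
    rw [hFc, card_Fc r m hm hr v c]
  rw [hsum]
  have hterm : ∀ c ∈ B', (if c = ((v.1 - v.2 : ℤ) : ZMod r) then 3*r+2 else 2*r+1)
      = (2*r+1) + (if c = ((v.1 - v.2 : ℤ) : ZMod r) then r+1 else 0) := by
    intro c _
    split <;> omega
  rw [Finset.sum_congr rfl hterm, Finset.sum_add_distrib, Finset.sum_const, smul_eq_mul,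
    Finset.sum_ite_eq' B' (((v.1 - v.2 : ℤ) : ZMod r)) (fun _ => r+1)]
  by_cases hvB : ((v.1 - v.2 : ℤ) : ZMod r) ∈ B
  · rw [if_pos ((Set.Finite.mem_toFinset _).mpr hvB), if_pos hvB]
  · rw [if_neg (fun h => hvB ((Set.Finite.mem_toFinset _).mp h)), if_neg hvB]

/-- For odd `r ≥ 3` and a nonempty `B ⊆ ZMod r`, the diagonal coloring
`S_B = {(x₁,x₂) : (x₁ - x₂ mod r) ∈ B}` is an `(r,a,b)`-code with
`a = (3r+2) + (|B|-1)(2r+1)` and `b = |B|(2r+1)`. -/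
theorem diagonal_code_odd (r : ℕ) (hr : 3 ≤ r) (hro : Odd r)
    (B : Set (ZMod r)) (hB : B.Nonempty) :
    IsRabCode r ((3 * r + 2) + (B.ncard - 1) * (2 * r + 1)) (B.ncard * (2 * r + 1))
      {x : ℤ × ℤ | ((x.1 - x.2 : ℤ) : ZMod r) ∈ B} := by
  haveI : NeZero r := ⟨by omega⟩
  obtain ⟨m, hm⟩ : ∃ m, r = 2*m+1 := by
    obtain ⟨m, hm⟩ := hro; exact ⟨m, by omega⟩
  have hncard : B.ncard = (Set.toFinite B).toFinset.card :=
    Set.ncard_eq_toFinset_card B (Set.toFinite B)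
  have hpos : 1 ≤ (Set.toFinite B).toFinset.card :=
    Finset.card_pos.mpr ((Set.Finite.toFinset_nonempty _).mpr hB)
  constructor
  · intro v hv
    have hv' : ((v.1 - v.2 : ℤ) : ZMod r) ∈ B := hv
    rw [count_ball r m hm hr B v, if_pos hv', hncard]
    obtain ⟨n, hn⟩ : ∃ n, (Set.toFinite B).toFinset.card = n + 1 :=
      ⟨(Set.toFinite B).toFinset.card - 1, by omega⟩
    rw [hn]
    simp only [Nat.add_sub_cancel]
    ring
  · intro v hv
    have hv' : ((v.1 - v.2 : ℤ) : ZMod r) ∉ B := hv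
    rw [count_ball r m hm hr B v, if_neg hv', hncard, add_zero]
end

section
/- Let r ≥ 0 and c be integers with |c| ≤ r. The intersection of the diagonal D_c = {(m, m+c) : m ∈ ℤ} with the ball B_r(0,0) = {u ∈ ℤ² : |u₁|+|u₂| ≤ r} has exactly r+1 elements if c ≡ r (mod 2), and exactly r elements if c ≢ r (mod 2). -/
/-- For integers `r ≥ 0` and `c` with `|c| ≤ r`, the diagonal
`D_c = {(m, m+c) : m ∈ ℤ}` meets the Manhattan ball
`B_r(0,0) = {u : |u₁| + |u₂| ≤ r}` in exactly `r+1` points if `c ≡ r (mod 2)`,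
and in exactly `r` points otherwise. -/
theorem diagonal_inter_ball_card (r c : ℤ) (hr : 0 ≤ r) (hc : |c| ≤ r) :
    (c % 2 = r % 2 →
      ((({u : ℤ × ℤ | ∃ m : ℤ, u = (m, m + c)} ∩
          {u : ℤ × ℤ | |u.1| + |u.2| ≤ r}).ncard : ℤ) = r + 1)) ∧
    (c % 2 ≠ r % 2 →
      ((({u : ℤ × ℤ | ∃ m : ℤ, u = (m, m + c)} ∩
          {u : ℤ × ℤ | |u.1| + |u.2| ≤ r}).ncard : ℤ) = r)) := by
  rcases abs_cases c with ⟨h1, h2⟩ | ⟨h1, h2⟩ <;>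
  · set a : ℤ := -((r + c) / 2) with ha
    set b : ℤ := (r - c) / 2 with hb
    have key : ∀ m : ℤ, (|m| + |m + c| ≤ r ↔ (a ≤ m ∧ m ≤ b)) := by
      intro m
      rcases abs_cases m with ⟨hm1, hm2⟩ | ⟨hm1, hm2⟩ <;>
        rcases abs_cases (m + c) with ⟨hn1, hn2⟩ | ⟨hn1, hn2⟩ <;> omega
    have hinj : Function.Injective (fun m : ℤ => ((m, m + c) : ℤ × ℤ)) := by
      intro x y h
      simpa using congrArg Prod.fst h
    have hset : {u : ℤ × ℤ | ∃ m : ℤ, u = (m, m + c)} ∩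
        {u : ℤ × ℤ | |u.1| + |u.2| ≤ r}
        = (fun m : ℤ => ((m, m + c) : ℤ × ℤ)) '' (Set.Icc a b) := by
      ext u
      simp only [Set.mem_inter_iff, Set.mem_setOf_eq, Set.mem_image, Set.mem_Icc]
      constructor
      · rintro ⟨⟨m, rfl⟩, h⟩
        exact ⟨m, (key m).mp h, rfl⟩
      · rintro ⟨m, hm, rfl⟩
        exact ⟨⟨m, rfl⟩, (key m).mpr hm⟩
    have hcard : (({u : ℤ × ℤ | ∃ m : ℤ, u = (m, m + c)} ∩
        {u : ℤ × ℤ | |u.1| + |u.2| ≤ r}).ncard : ℤ) = b + 1 - a := by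
      rw [hset, Set.ncard_image_of_injective _ hinj, ← Finset.coe_Icc,
        Set.ncard_coe_finset, Int.card_Icc]
      omega
    rw [hcard]
    constructor <;> intro h <;> omega
end
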